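/- arXiv:2402.05771 — 4 statements merged into one kernel-verified Lean document; each statement's English description precedes it below -/
import Mathlib

section
/- Let F(m) denote the number of noncrossing (1,2)-configurations of [m] fixed by the reflection i ↦ m+1−i. Then F(0)=1, F(1)=2, F(2)=3, F(3)=6, and for m ≥ 4, F(m) = 3F(m−2) + Σ_{i=2}^{⌊m/2⌋} Cat_{i−1}·F(m−2i), where Cat_j is the j-th Catalan number. -/
open scoped Classical

def IsConfig (m : ℕ) (x : Finset (Finset ℕ)) : Prop :=
  (∀ B ∈ x, B ⊆ Finset.Icc 1 m ∧ (B.card = 1 ∨ B.card = 2)) ∧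
  (∀ B ∈ x, ∀ C ∈ x, B ≠ C → Disjoint B C) ∧
  (∀ i₁ j₁ i₂ j₂ : ℕ, ({i₁, j₁} : Finset ℕ) ∈ x → ({i₂, j₂} : Finset ℕ) ∈ x →
    i₁ < i₂ → i₂ < j₁ → j₁ < j₂ → False)

noncomputable def Configs (m : ℕ) : Finset (Finset (Finset ℕ)) :=
  ((Finset.Icc 1 m).powerset.powerset).filter (IsConfig m)

namespace NC
open Finset

def NoCross (x : Finset (Finset ℕ)) : Prop :=
  ∀ i₁ j₁ i₂ j₂ : ℕ, ({i₁, j₁} : Finset ℕ) ∈ x → ({i₂, j₂} : Finset ℕ) ∈ x →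
    i₁ < i₂ → i₂ < j₁ → j₁ < j₂ → False

structure OK (a b : ℕ) (x : Finset (Finset ℕ)) : Prop where
  sub : ∀ B ∈ x, B ⊆ Finset.Icc a b
  cd : ∀ B ∈ x, B.card = 1 ∨ B.card = 2
  disj : ∀ B ∈ x, ∀ C ∈ x, B ≠ C → Disjoint B C
  nc : NoCross x

theorem isConfig_iff {m x} : IsConfig m x ↔ OK 1 m x := by
  constructor
  · rintro ⟨h1, h2, h3⟩
    exact ⟨fun B hB => (h1 B hB).1, fun B hB => (h1 B hB).2, h2, h3⟩
  · rintro ⟨h1, h2, h3, h4⟩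
    exact ⟨fun B hB => ⟨h1 B hB, h2 B hB⟩, h3, h4⟩

theorem mem_Configs {m x} : x ∈ Configs m ↔ OK 1 m x := by
  rw [Configs, mem_filter, isConfig_iff]
  constructor
  · exact fun h => h.2
  · intro h
    refine ⟨?_, h⟩
    rw [mem_powerset]
    intro B hB
    rw [mem_powerset]
    exact h.sub B hB

theorem OK.mono {a b x} (h : OK a b x) {y : Finset (Finset ℕ)} {c d : ℕ}
    (hy : y ⊆ x) (hsub : ∀ B ∈ y, B ⊆ Finset.Icc c d) : OK c d y :=
  ⟨hsub, fun B hB => h.cd B (hy hB), fun B hB C hC => h.disj B (hy hB) C (hy hC),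
   fun i₁ j₁ i₂ j₂ h1 h2 => h.nc i₁ j₁ i₂ j₂ (hy h1) (hy h2)⟩

theorem OK.shape {a b x} (h : OK a b x) {B} (hB : B ∈ x) :
    ∃ u v, u ≤ v ∧ a ≤ u ∧ v ≤ b ∧ B = {u, v} := by
  rcases h.cd B hB with hc | hc
  · obtain ⟨u, rfl⟩ := Finset.card_eq_one.1 hc
    have hu := h.sub _ hB (mem_singleton_self u)
    rw [mem_Icc] at hu
    exact ⟨u, u, le_rfl, hu.1, hu.2, by simp⟩
  · obtain ⟨u, v, huv, rfl⟩ := Finset.card_eq_two.1 hc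
    have hu := h.sub _ hB (show u ∈ ({u, v} : Finset ℕ) by simp)
    have hv := h.sub _ hB (show v ∈ ({u, v} : Finset ℕ) by simp)
    rw [mem_Icc] at hu hv
    rcases le_total u v with hle | hle
    · exact ⟨u, v, hle, hu.1, hv.2, rfl⟩
    · exact ⟨v, u, hle, hv.1, hu.2, by rw [pair_comm]⟩

theorem pair_mem_image {f : ℕ → ℕ} {a b x} (h : OK a b x) {i j : ℕ} (hij : i ≠ j)
    (hm : ({i, j} : Finset ℕ) ∈ x.image (fun B => B.image f)) :
    ∃ u v, ({u, v} : Finset ℕ) ∈ x ∧ u ∈ Finset.Icc a b ∧ v ∈ Finset.Icc a b ∧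
      f u = i ∧ f v = j := by
  obtain ⟨B, hB, hBf⟩ := Finset.mem_image.1 hm
  have hi : i ∈ B.image f := by rw [hBf]; simp
  have hj : j ∈ B.image f := by rw [hBf]; simp
  obtain ⟨u, hu, hfu⟩ := Finset.mem_image.1 hi
  obtain ⟨v, hv, hfv⟩ := Finset.mem_image.1 hj
  have huv : u ≠ v := by rintro rfl; exact hij (hfu ▸ hfv)
  have hcard : B.card ≤ 2 := by rcases h.cd B hB with hc | hc <;> omega
  have hsub : ({u, v} : Finset ℕ) ⊆ B := by
    intro t ht; rcases Finset.mem_insert.1 ht with rfl | ht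
    · exact hu
    · rw [Finset.mem_singleton.1 ht]; exact hv
  have hBe : ({u, v} : Finset ℕ) = B :=
    Finset.eq_of_subset_of_card_le hsub (by rw [Finset.card_pair huv]; exact hcard)
  exact ⟨u, v, hBe ▸ hB, h.sub B hB hu, h.sub B hB hv, hfu, hfv⟩

theorem OK.map {f : ℕ → ℕ} {a b a' b' x} (h : OK a b x)
    (hf : ∀ u ∈ Finset.Icc a b, f u ∈ Finset.Icc a' b')
    (hmono : ∀ u ∈ Finset.Icc a b, ∀ v ∈ Finset.Icc a b, u < v → f u < f v) :
    OK a' b' (x.image (fun B => B.image f)) := by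
  have hinj : ∀ u ∈ Finset.Icc a b, ∀ v ∈ Finset.Icc a b, f u = f v → u = v := by
    intro u hu v hv he
    rcases lt_trichotomy u v with hlt | rfl | hlt
    · exact absurd he (Nat.ne_of_lt (hmono u hu v hv hlt))
    · rfl
    · exact absurd he.symm (Nat.ne_of_lt (hmono v hv u hu hlt))
  constructor
  · intro B' hB'
    obtain ⟨B, hB, rfl⟩ := Finset.mem_image.1 hB'
    intro t ht
    obtain ⟨u, hu, rfl⟩ := Finset.mem_image.1 ht
    exact hf u (h.sub B hB hu)
  · intro B' hB'
    obtain ⟨B, hB, rfl⟩ := Finset.mem_image.1 hB'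
    rw [Finset.card_image_of_injOn (fun u hu v hv => hinj u (h.sub B hB hu) v (h.sub B hB hv))]
    exact h.cd B hB
  · intro B' hB' C' hC' hne
    obtain ⟨B, hB, rfl⟩ := Finset.mem_image.1 hB'
    obtain ⟨C, hC, rfl⟩ := Finset.mem_image.1 hC'
    have hBC : B ≠ C := by rintro rfl; exact hne rfl
    rw [Finset.disjoint_left]
    intro t htB htC
    obtain ⟨u, hu, rfl⟩ := Finset.mem_image.1 htB
    obtain ⟨v, hv, hfv⟩ := Finset.mem_image.1 htC
    have : u = v := hinj v (h.sub C hC hv) u (h.sub B hB hu) hfv |>.symm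
    subst this
    exact (Finset.disjoint_left.1 (h.disj B hB C hC hBC) hu) hv
  · intro i₁ j₁ i₂ j₂ h1 h2 l1 l2 l3
    obtain ⟨u₁, v₁, hm1, hu1, hv1, rfl, rfl⟩ := pair_mem_image h (by omega) h1
    obtain ⟨u₂, v₂, hm2, hu2, hv2, rfl, rfl⟩ := pair_mem_image h (by omega) h2
    have r : ∀ p, p ∈ Finset.Icc a b → ∀ q, q ∈ Finset.Icc a b → f p < f q → p < q := by
      intro p hp q hq hlt
      rcases lt_trichotomy p q with hh | rfl | hh
      · exact hh
      · omega
      · exact absurd (hmono q hq p hp hh) (by omega)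
    exact h.nc u₁ v₁ u₂ v₂ hm1 hm2 (r _ hu1 _ hu2 l1) (r _ hu2 _ hv1 l2) (r _ hv1 _ hv2 l3)

theorem OK.mapAnti {f : ℕ → ℕ} {a b a' b' x} (h : OK a b x)
    (hf : ∀ u ∈ Finset.Icc a b, f u ∈ Finset.Icc a' b')
    (hanti : ∀ u ∈ Finset.Icc a b, ∀ v ∈ Finset.Icc a b, u < v → f v < f u) :
    OK a' b' (x.image (fun B => B.image f)) := by
  have hinj : ∀ u ∈ Finset.Icc a b, ∀ v ∈ Finset.Icc a b, f u = f v → u = v := by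
    intro u hu v hv he
    rcases lt_trichotomy u v with hlt | rfl | hlt
    · exact absurd he.symm (Nat.ne_of_lt (hanti u hu v hv hlt))
    · rfl
    · exact absurd he (Nat.ne_of_lt (hanti v hv u hu hlt))
  constructor
  · intro B' hB'
    obtain ⟨B, hB, rfl⟩ := Finset.mem_image.1 hB'
    intro t ht
    obtain ⟨u, hu, rfl⟩ := Finset.mem_image.1 ht
    exact hf u (h.sub B hB hu)
  · intro B' hB'
    obtain ⟨B, hB, rfl⟩ := Finset.mem_image.1 hB'
    rw [Finset.card_image_of_injOn (fun u hu v hv => hinj u (h.sub B hB hu) v (h.sub B hB hv))]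
    exact h.cd B hB
  · intro B' hB' C' hC' hne
    obtain ⟨B, hB, rfl⟩ := Finset.mem_image.1 hB'
    obtain ⟨C, hC, rfl⟩ := Finset.mem_image.1 hC'
    have hBC : B ≠ C := by rintro rfl; exact hne rfl
    rw [Finset.disjoint_left]
    intro t htB htC
    obtain ⟨u, hu, rfl⟩ := Finset.mem_image.1 htB
    obtain ⟨v, hv, hfv⟩ := Finset.mem_image.1 htC
    have : u = v := hinj v (h.sub C hC hv) u (h.sub B hB hu) hfv |>.symm
    subst this
    exact (Finset.disjoint_left.1 (h.disj B hB C hC hBC) hu) hv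
  · intro i₁ j₁ i₂ j₂ h1 h2 l1 l2 l3
    obtain ⟨u₁, v₁, hm1, hu1, hv1, rfl, rfl⟩ := pair_mem_image h (by omega) h1
    obtain ⟨u₂, v₂, hm2, hu2, hv2, rfl, rfl⟩ := pair_mem_image h (by omega) h2
    have r : ∀ p, p ∈ Finset.Icc a b → ∀ q, q ∈ Finset.Icc a b → f p < f q → q < p := by
      intro p hp q hq hlt
      rcases lt_trichotomy q p with hh | rfl | hh
      · exact hh
      · omega
      · exact absurd (hanti p hp q hq hh) (by omega)
    -- order: v₂ < v₁ < u₂ < u₁; arcs {v₂,u₂}, {v₁,u₁}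
    refine h.nc v₂ u₂ v₁ u₁ ?_ ?_ ?_ ?_ ?_
    · rw [pair_comm]; exact hm2
    · rw [pair_comm]; exact hm1
    · exact r _ hv1 _ hv2 l3
    · exact r _ hu2 _ hv1 l2
    · exact r _ hu1 _ hu2 l1



noncomputable def up (d : ℕ) (x : Finset (Finset ℕ)) : Finset (Finset ℕ) :=
  x.image (fun B => B.image (· + d))

noncomputable def dn (d : ℕ) (x : Finset (Finset ℕ)) : Finset (Finset ℕ) :=
  x.image (fun B => B.image (· - d))

noncomputable def rf (m : ℕ) (x : Finset (Finset ℕ)) : Finset (Finset ℕ) :=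
  x.image (fun B => B.image (fun i => m + 1 - i))

theorem img_congr {f g : ℕ → ℕ} {x : Finset (Finset ℕ)}
    (h : ∀ B ∈ x, ∀ t ∈ B, f t = g t) :
    x.image (fun B => B.image f) = x.image (fun B => B.image g) :=
  Finset.image_congr (fun B hB => Finset.image_congr (fun t ht => h B hB t ht))

theorem img_id {f : ℕ → ℕ} {x : Finset (Finset ℕ)}
    (h : ∀ B ∈ x, ∀ t ∈ B, f t = t) : x.image (fun B => B.image f) = x := by
  rw [img_congr h]
  simp

theorem img2 (f g : ℕ → ℕ) (x : Finset (Finset ℕ)) :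
    ((x.image (fun B => B.image f)).image (fun B => B.image g)) =
      x.image (fun B => B.image (fun t => g (f t))) := by
  rw [Finset.image_image]
  refine Finset.image_congr (fun B _ => ?_)
  show (B.image f).image g = _
  rw [Finset.image_image]
  rfl

theorem dn_up (d : ℕ) (x : Finset (Finset ℕ)) : dn d (up d x) = x := by
  rw [up, dn, img2]
  exact img_id (fun B _ t _ => by omega)

theorem up_dn {d : ℕ} {x : Finset (Finset ℕ)} (h : ∀ B ∈ x, ∀ t ∈ B, d ≤ t) :
    up d (dn d x) = x := by
  rw [up, dn, img2]
  exact img_id (fun B hB t ht => by have := h B hB t ht; omega)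

theorem rf_rf {m : ℕ} {x : Finset (Finset ℕ)} (h : ∀ B ∈ x, ∀ t ∈ B, t ≤ m) :
    rf m (rf m x) = x := by
  rw [rf, rf, img2]
  exact img_id (fun B hB t ht => by have := h B hB t ht; omega)

theorem rf_dn {d m : ℕ} {x : Finset (Finset ℕ)} (hdm : 2 * d ≤ m)
    (h : ∀ B ∈ x, ∀ t ∈ B, d + 1 ≤ t ∧ t ≤ m - d) :
    rf (m - 2 * d) (dn d x) = dn d (rf m x) := by
  rw [rf, rf, dn, dn, img2, img2]
  refine img_congr (fun B hB t ht => ?_)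
  have := h B hB t ht
  omega

theorem rf_up {d m : ℕ} {x : Finset (Finset ℕ)} (hdm : 2 * d ≤ m)
    (h : ∀ B ∈ x, ∀ t ∈ B, 1 ≤ t ∧ t ≤ m - 2 * d) :
    rf m (up d x) = up d (rf (m - 2 * d) x) := by
  rw [rf, rf, up, up, img2, img2]
  refine img_congr (fun B hB t ht => ?_)
  have := h B hB t ht
  omega

theorem OK.up' {a b d : ℕ} {x : Finset (Finset ℕ)} (h : OK a b x) :
    OK (a + d) (b + d) (up d x) :=
  h.map (fun u hu => by rw [Finset.mem_Icc] at *; omega)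
    (fun u _ v _ huv => by omega)

theorem OK.dn' {a b d : ℕ} {x : Finset (Finset ℕ)} (h : OK a b x) (hd : d < a) :
    OK (a - d) (b - d) (dn d x) :=
  h.map (fun u hu => by rw [Finset.mem_Icc] at *; omega)
    (fun u hu v hv huv => by rw [Finset.mem_Icc] at *; omega)

theorem OK.rf' {a b m : ℕ} {x : Finset (Finset ℕ)} (h : OK a b x) (hb : b ≤ m) :
    OK (m + 1 - b) (m + 1 - a) (rf m x) :=
  h.mapAnti (fun u hu => by rw [Finset.mem_Icc] at *; omega)
    (fun u hu v hv huv => by rw [Finset.mem_Icc] at *; omega)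

theorem nc_union_sep {x y : Finset (Finset ℕ)} {b : ℕ}
    (hx : ∀ B ∈ x, ∀ t ∈ B, t ≤ b) (hy : ∀ B ∈ y, ∀ t ∈ B, b < t)
    (nx : NoCross x) (ny : NoCross y) : NoCross (x ∪ y) := by
  intro i₁ j₁ i₂ j₂ h1 h2 l1 l2 l3
  rcases Finset.mem_union.1 h1 with h1 | h1 <;> rcases Finset.mem_union.1 h2 with h2 | h2
  · exact nx _ _ _ _ h1 h2 l1 l2 l3
  · have := hx _ h1 j₁ (by simp)
    have := hy _ h2 i₂ (by simp)
    omega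
  · have := hy _ h1 i₁ (by simp)
    have := hx _ h2 i₂ (by simp)
    omega
  · exact ny _ _ _ _ h1 h2 l1 l2 l3

theorem nc_insert_arc {p q : ℕ} {y : Finset (Finset ℕ)} (hpq : p < q)
    (hy : ∀ B ∈ y, (∀ t ∈ B, t < p) ∨ (∀ t ∈ B, p < t ∧ t < q) ∨ (∀ t ∈ B, q < t))
    (ny : NoCross y) : NoCross (insert ({p, q} : Finset ℕ) y) := by
  intro i₁ j₁ i₂ j₂ h1 h2 l1 l2 l3
  have key : ∀ i j : ℕ, i < j → ({i, j} : Finset ℕ) = ({p, q} : Finset ℕ) → i = p ∧ j = q := by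
    intro i j hij he
    have hi : i ∈ ({p, q} : Finset ℕ) := he ▸ (by simp : i ∈ ({i, j} : Finset ℕ))
    have hj : j ∈ ({p, q} : Finset ℕ) := he ▸ (by simp : j ∈ ({i, j} : Finset ℕ))
    simp only [Finset.mem_insert, Finset.mem_singleton] at hi hj
    omega
  rcases Finset.mem_insert.1 h1 with h1 | h1 <;> rcases Finset.mem_insert.1 h2 with h2 | h2
  · obtain ⟨e1, e2⟩ := key i₁ j₁ (by omega) h1
    obtain ⟨e3, e4⟩ := key i₂ j₂ (by omega) h2
    omega
  · obtain ⟨e1, e2⟩ := key i₁ j₁ (by omega) h1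
    rcases hy _ h2 with hc | hc | hc
    · have := hc i₂ (by simp); omega
    · have := hc j₂ (by simp); omega
    · have := hc i₂ (by simp); omega
  · obtain ⟨e1, e2⟩ := key i₂ j₂ (by omega) h2
    rcases hy _ h1 with hc | hc | hc
    · have := hc j₁ (by simp); omega
    · have := hc i₁ (by simp); omega
    · have := hc i₁ (by simp); omega
  · exact ny _ _ _ _ h1 h2 l1 l2 l3

theorem nc_insert_single {t : ℕ} {y : Finset (Finset ℕ)} (ny : NoCross y) :
    NoCross (insert ({t} : Finset ℕ) y) := by
  intro i₁ j₁ i₂ j₂ h1 h2 l1 l2 l3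
  have key : ∀ i j : ℕ, ({i, j} : Finset ℕ) = ({t} : Finset ℕ) → i = j := by
    intro i j he
    have hi : i ∈ ({t} : Finset ℕ) := he ▸ (by simp : i ∈ ({i, j} : Finset ℕ))
    have hj : j ∈ ({t} : Finset ℕ) := he ▸ (by simp : j ∈ ({i, j} : Finset ℕ))
    simp only [Finset.mem_singleton] at hi hj
    omega
  rcases Finset.mem_insert.1 h1 with h1 | h1
  · have := key _ _ h1; omega
  rcases Finset.mem_insert.1 h2 with h2 | h2
  · have := key _ _ h2; omega
  exact ny _ _ _ _ h1 h2 l1 l2 l3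

theorem OK.union {a b c d : ℕ} {x y : Finset (Finset ℕ)}
    (hx : OK a b x) (hy : OK c d y) (hbc : b < c) (hbd : b ≤ d) (hac : a ≤ c) :
    OK a d (x ∪ y) := by
  have hxb : ∀ B ∈ x, ∀ t ∈ B, t ≤ b := fun B hB t ht => (Finset.mem_Icc.1 (hx.sub B hB ht)).2
  have hyc : ∀ B ∈ y, ∀ t ∈ B, c ≤ t := fun B hB t ht => (Finset.mem_Icc.1 (hy.sub B hB ht)).1
  constructor
  · intro B hB
    rcases Finset.mem_union.1 hB with hB | hB
    · exact (hx.sub B hB).trans (Finset.Icc_subset_Icc le_rfl (by omega))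
    · exact (hy.sub B hB).trans (Finset.Icc_subset_Icc (by omega) le_rfl)
  · intro B hB
    rcases Finset.mem_union.1 hB with hB | hB
    · exact hx.cd B hB
    · exact hy.cd B hB
  · intro B hB C hC hne
    rcases Finset.mem_union.1 hB with hB | hB <;> rcases Finset.mem_union.1 hC with hC | hC
    · exact hx.disj B hB C hC hne
    · rw [Finset.disjoint_left]
      intro t htB htC
      have := hxb B hB t htB; have := hyc C hC t htC; omega
    · rw [Finset.disjoint_left]
      intro t htB htC
      have := hyc B hB t htB; have := hxb C hC t htC; omega
    · exact hy.disj B hB C hC hne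
  · exact nc_union_sep hxb (fun B hB t ht => by have := hyc B hB t ht; omega) hx.nc hy.nc

noncomputable def Sym (m : ℕ) : Finset (Finset (Finset ℕ)) :=
  (Configs m).filter (fun x => x.image (fun B => B.image fun i => m + 1 - i) = x)

theorem mem_Sym {m x} : x ∈ Sym m ↔ OK 1 m x ∧ rf m x = x := by
  rw [Sym, Finset.mem_filter, mem_Configs, rf]

theorem rf_mem {m : ℕ} {x : Finset (Finset ℕ)} (hsym : rf m x = x) {B : Finset ℕ}
    (hB : B ∈ x) : B.image (fun i => m + 1 - i) ∈ x := by
  have h2 : B.image (fun i => m + 1 - i) ∈ rf m x := Finset.mem_image_of_mem _ hB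
  rwa [hsym] at h2

theorem rf_pair (m u v : ℕ) :
    (({u, v} : Finset ℕ)).image (fun i => m + 1 - i) = ({m + 1 - u, m + 1 - v} : Finset ℕ) := by
  simp [Finset.image_insert]

-- tag
noncomputable def tag (x : Finset (Finset ℕ)) : ℕ :=
  x.sup (fun B => if 1 ∈ B then B.sup id else 0)

theorem tag_eq_of_mem {m : ℕ} {x : Finset (Finset ℕ)} (h : OK 1 m x) {j : ℕ} (hj : 1 ≤ j)
    (hmem : ({1, j} : Finset ℕ) ∈ x) : tag x = j := by
  apply le_antisymm
  · apply Finset.sup_le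
    intro B hB
    by_cases h1 : 1 ∈ B
    · have hBe : B = ({1, j} : Finset ℕ) := by
        by_contra hne
        exact (Finset.disjoint_left.1 (h.disj B hB _ hmem hne) h1) (by simp)
      rw [if_pos h1, hBe]
      apply Finset.sup_le
      intro t ht
      simp only [Finset.mem_insert, Finset.mem_singleton] at ht
      rcases ht with rfl | rfl <;> simp [hj]
    · rw [if_neg h1]; exact Nat.zero_le _
  · have key := Finset.le_sup (f := fun B => if 1 ∈ B then B.sup id else 0) hmem
    simp only [if_pos (show 1 ∈ ({1, j} : Finset ℕ) by simp)] at key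
    refine le_trans ?_ key
    exact Finset.le_sup (f := id) (by simp : j ∈ ({1, j} : Finset ℕ))

theorem tag_eq_zero {x : Finset (Finset ℕ)} (h : ∀ B ∈ x, 1 ∉ B) : tag x = 0 := by
  apply Nat.le_zero.1
  apply Finset.sup_le
  intro B hB
  rw [if_neg (h B hB)]

theorem tag_cases {m : ℕ} {x : Finset (Finset ℕ)} (h : OK 1 m x) :
    (tag x = 0 ∧ ∀ B ∈ x, 1 ∉ B) ∨
      ∃ j, 1 ≤ j ∧ ({1, j} : Finset ℕ) ∈ x ∧ tag x = j := by
  by_cases hall : ∀ B ∈ x, 1 ∉ B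
  · exact Or.inl ⟨tag_eq_zero hall, hall⟩
  · push_neg at hall
    obtain ⟨B, hB, h1⟩ := hall
    obtain ⟨u, v, huv, hu, hv, rfl⟩ := h.shape hB
    simp only [Finset.mem_insert, Finset.mem_singleton] at h1
    have hu1 : u = 1 := by omega
    subst hu1
    exact Or.inr ⟨v, by omega, hB, tag_eq_of_mem h (by omega) hB⟩

-- reflection commutes with interval filters
theorem rf_filter {m a b c d : ℕ} {x : Finset (Finset ℕ)} (h : OK 1 m x) (hsym : rf m x = x)
    (h1 : ∀ t, a ≤ t → t ≤ b → t ≤ m ∧ c ≤ m + 1 - t ∧ m + 1 - t ≤ d)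
    (h2 : ∀ s, c ≤ s → s ≤ d → s ≤ m ∧ a ≤ m + 1 - s ∧ m + 1 - s ≤ b) :
    rf m (x.filter (fun B => B ⊆ Finset.Icc a b)) = x.filter (fun B => B ⊆ Finset.Icc c d) := by
  ext B
  simp only [rf, Finset.mem_image, Finset.mem_filter]
  constructor
  · rintro ⟨C, hC, rfl⟩
    refine ⟨rf_mem hsym hC.1, ?_⟩
    intro s hs
    obtain ⟨t, ht, rfl⟩ := Finset.mem_image.1 hs
    have hti := Finset.mem_Icc.1 (hC.2 ht)
    have := h1 t hti.1 hti.2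
    rw [Finset.mem_Icc]
    omega
  · rintro ⟨hB, hBsub⟩
    refine ⟨B.image (fun i => m + 1 - i), ⟨rf_mem hsym hB, ?_⟩, ?_⟩
    · intro t ht
      obtain ⟨s, hs, rfl⟩ := Finset.mem_image.1 ht
      have hsi := Finset.mem_Icc.1 (hBsub hs)
      have := h2 s hsi.1 hsi.2
      rw [Finset.mem_Icc]
      omega
    · have : ∀ s ∈ B, s ≤ m := by
        intro s hs
        exact (h2 s (Finset.mem_Icc.1 (hBsub hs)).1 (Finset.mem_Icc.1 (hBsub hs)).2).1
      rw [Finset.image_image]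
      apply Finset.image_congr (g := id) ?_ |>.trans (Finset.image_id)
      intro s hs
      have := this s hs
      simp only [Function.comp, id]
      omega

theorem rf_union (m : ℕ) (s t : Finset (Finset ℕ)) : rf m (s ∪ t) = rf m s ∪ rf m t :=
  Finset.image_union _ _

theorem card_fiber_E {m : ℕ} (hm : 2 ≤ m) (t : ℕ) (E : Finset (Finset ℕ))
    (hE1m : ∀ B ∈ E, B ⊆ ({1, m} : Finset ℕ))
    (hEcd : ∀ B ∈ E, B.card = 1 ∨ B.card = 2)
    (hEdisj : ∀ B ∈ E, ∀ C ∈ E, B ≠ C → Disjoint B C)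
    (hErf : rf m E = E)
    (hEnc : ∀ y, (∀ B ∈ y, B ⊆ Finset.Icc 2 (m - 1)) → NoCross y → NoCross (E ∪ y))
    (htag : ∀ x, OK 1 m x → rf m x = x →
      (tag x = t ↔ E ⊆ x ∧ ∀ B ∈ x, B ∉ E → B ⊆ Finset.Icc 2 (m - 1))) :
    ((Sym m).filter (fun x => tag x = t)).card = (Sym (m - 2)).card := by
  have hEint : ∀ B ∈ E, ¬ B ⊆ Finset.Icc 2 (m - 1) := by
    intro B hB hsub
    have hne : B.Nonempty := Finset.card_pos.1 (by rcases hEcd B hB with h | h <;> omega)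
    obtain ⟨u, hu⟩ := hne
    have h1 := hE1m B hB hu
    have h2 := Finset.mem_Icc.1 (hsub hu)
    simp only [Finset.mem_insert, Finset.mem_singleton] at h1
    omega
  have hEIcc : ∀ B ∈ E, B ⊆ Finset.Icc 1 m := by
    intro B hB u hu
    have h1 := hE1m B hB hu
    simp only [Finset.mem_insert, Finset.mem_singleton] at h1
    rw [Finset.mem_Icc]
    omega
  apply Finset.card_bij'
    (i := fun x _ => dn 1 (x.filter (fun B => B ⊆ Finset.Icc 2 (m - 1))))
    (j := fun y _ => E ∪ up 1 y)
  -- i maps into Sym (m-2)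
  · intro x hx
    obtain ⟨hxS, hxt⟩ := Finset.mem_filter.1 hx
    obtain ⟨hOK, hsym⟩ := mem_Sym.1 hxS
    set W := x.filter (fun B => B ⊆ Finset.Icc 2 (m - 1)) with hW
    have hWOK : OK 2 (m - 1) W :=
      hOK.mono (Finset.filter_subset _ _) (fun B hB => (Finset.mem_filter.1 hB).2)
    have hWsym : rf m W = W := by
      apply rf_filter hOK hsym
      · intro u h1 h2; omega
      · intro u h1 h2; omega
    have hdOK : OK 1 (m - 2) (dn 1 W) := by
      have := hWOK.dn' (show 1 < 2 by norm_num)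
      have e1 : 2 - 1 = 1 := by omega
      have e2 : m - 1 - 1 = m - 2 := by omega
      rwa [e1, e2] at this
    have hdsym : rf (m - 2) (dn 1 W) = dn 1 W := by
      have := rf_dn (d := 1) (m := m) (x := W) (by omega) ?_
      · have e : m - 2 * 1 = m - 2 := by omega
        rw [e] at this
        rw [this, hWsym]
      · intro B hB u hu
        have := Finset.mem_Icc.1 (hWOK.sub B hB hu)
        omega
    exact mem_Sym.2 ⟨hdOK, hdsym⟩
  -- j maps into fiber
  · intro y hy
    obtain ⟨hyOK, hysym⟩ := mem_Sym.1 hy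
    have hUOK : OK 2 (m - 1) (up 1 y) := by
      have := hyOK.up' (d := 1)
      have e : m - 2 + 1 = m - 1 := by omega
      rwa [e] at this
    have hOKx : OK 1 m (E ∪ up 1 y) := by
      constructor
      · intro B hB
        rcases Finset.mem_union.1 hB with hB | hB
        · exact hEIcc B hB
        · exact (hUOK.sub B hB).trans (Finset.Icc_subset_Icc (by omega) (by omega))
      · intro B hB
        rcases Finset.mem_union.1 hB with hB | hB
        · exact hEcd B hB
        · exact hUOK.cd B hB
      · intro B hB C hC hne
        rcases Finset.mem_union.1 hB with hB | hB <;> rcases Finset.mem_union.1 hC with hC | hC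
        · exact hEdisj B hB C hC hne
        · rw [Finset.disjoint_left]
          intro u huB huC
          have h1 := hE1m B hB huB
          have h2 := Finset.mem_Icc.1 (hUOK.sub C hC huC)
          simp only [Finset.mem_insert, Finset.mem_singleton] at h1
          omega
        · rw [Finset.disjoint_left]
          intro u huB huC
          have h1 := hE1m C hC huC
          have h2 := Finset.mem_Icc.1 (hUOK.sub B hB huB)
          simp only [Finset.mem_insert, Finset.mem_singleton] at h1
          omega
        · exact hUOK.disj B hB C hC hne
      · exact hEnc (up 1 y) hUOK.sub hUOK.nc
    have hsymx : rf m (E ∪ up 1 y) = E ∪ up 1 y := by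
      rw [rf_union, hErf]
      congr 1
      have := rf_up (d := 1) (m := m) (x := y) (by omega) ?_
      · have e : m - 2 * 1 = m - 2 := by omega
        rw [e] at this
        rw [this, hysym]
      · intro B hB u hu
        have := Finset.mem_Icc.1 (hyOK.sub B hB hu)
        omega
    refine Finset.mem_filter.2 ⟨mem_Sym.2 ⟨hOKx, hsymx⟩, ?_⟩
    rw [htag _ hOKx hsymx]
    refine ⟨Finset.subset_union_left, ?_⟩
    intro B hB hBE
    rcases Finset.mem_union.1 hB with hB | hB
    · exact absurd hB hBE
    · exact hUOK.sub B hB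
  -- left inverse
  · intro x hx
    obtain ⟨hxS, hxt⟩ := Finset.mem_filter.1 hx
    obtain ⟨hOK, hsym⟩ := mem_Sym.1 hxS
    obtain ⟨hEsub, hrest⟩ := (htag x hOK hsym).1 hxt
    have hWsub : ∀ B ∈ x.filter (fun B => B ⊆ Finset.Icc 2 (m - 1)), ∀ u ∈ B, 1 ≤ u := by
      intro B hB u hu
      have := Finset.mem_Icc.1 ((Finset.mem_filter.1 hB).2 hu)
      omega
    rw [up_dn hWsub]
    ext B
    simp only [Finset.mem_union, Finset.mem_filter]
    constructor
    · rintro (hB | hB)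
      · exact hEsub hB
      · exact hB.1
    · intro hB
      by_cases hBE : B ∈ E
      · exact Or.inl hBE
      · exact Or.inr ⟨hB, hrest B hB hBE⟩
  -- right inverse
  · intro y hy
    obtain ⟨hyOK, hysym⟩ := mem_Sym.1 hy
    have hUb : ∀ B ∈ up 1 y, B ⊆ Finset.Icc 2 (m - 1) := by
      have := hyOK.up' (d := 1)
      have e : m - 2 + 1 = m - 1 := by omega
      rw [e] at this
      exact this.sub
    rw [Finset.filter_union, Finset.filter_false_of_mem hEint,
      Finset.filter_true_of_mem hUb, Finset.empty_union, dn_up]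

theorem interior_of_no_boundary {m : ℕ} {x : Finset (Finset ℕ)} (hOK : OK 1 m x)
    {B : Finset ℕ} (hB : B ∈ x) (h1 : 1 ∉ B) (hm : m ∉ B) : B ⊆ Finset.Icc 2 (m - 1) := by
  intro u hu
  have := Finset.mem_Icc.1 (hOK.sub B hB hu)
  have hu1 : u ≠ 1 := by rintro rfl; exact h1 hu
  have hum : u ≠ m := by rintro rfl; exact hm hu
  rw [Finset.mem_Icc]
  omega

theorem card_fiber0 {m : ℕ} (hm : 2 ≤ m) :
    ((Sym m).filter (fun x => tag x = 0)).card = (Sym (m - 2)).card := by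
  apply card_fiber_E hm 0 ∅ (by simp) (by simp) (by simp) (by simp [rf])
  · intro y hy ny
    rwa [Finset.empty_union]
  · intro x hOK hsym
    simp only [Finset.empty_subset, Finset.notMem_empty, not_false_iff, true_and, true_implies]
    constructor
    · intro ht B hB
      rcases tag_cases hOK with ⟨_, hall⟩ | ⟨j, hj, hmem, hjt⟩
      · refine interior_of_no_boundary hOK hB (hall B hB) ?_
        intro hmB
        have h1' : (1 : ℕ) ∈ B.image (fun i => m + 1 - i) := by
          refine Finset.mem_image.2 ⟨m, hmB, by omega⟩
        exact hall _ (rf_mem hsym hB) h1'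
      · omega
    · intro hall
      apply tag_eq_zero
      intro B hB h1
      have := Finset.mem_Icc.1 (hall B hB h1)
      omega

theorem pair_one_one : ({1, 1} : Finset ℕ) = ({1} : Finset ℕ) := by simp

theorem card_fiber1 {m : ℕ} (hm : 2 ≤ m) :
    ((Sym m).filter (fun x => tag x = 1)).card = (Sym (m - 2)).card := by
  have h1m : (1 : ℕ) ≠ m := by omega
  have e1 : m + 1 - 1 = m := by omega
  have e2 : m + 1 - m = 1 := by omega
  apply card_fiber_E hm 1 ({{1}, {m}} : Finset (Finset ℕ))
  · intro B hB
    rcases Finset.mem_insert.1 hB with rfl | hB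
    · intro u hu; simp at hu; simp [hu]
    · rw [Finset.mem_singleton.1 hB]
      intro u hu; simp at hu; simp [hu]
  · intro B hB
    rcases Finset.mem_insert.1 hB with rfl | hB
    · simp
    · rw [Finset.mem_singleton.1 hB]; simp
  · intro B hB C hC hne
    rcases Finset.mem_insert.1 hB with rfl | hB <;> rcases Finset.mem_insert.1 hC with rfl | hC
    · exact absurd rfl hne
    · rw [Finset.mem_singleton.1 hC]
      simp only [Finset.disjoint_singleton]
      omega
    · rw [Finset.mem_singleton.1 hB]
      simp only [Finset.disjoint_singleton]
      omega
    · exact absurd ((Finset.mem_singleton.1 hB).trans (Finset.mem_singleton.1 hC).symm) hne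
  · simp [rf, Finset.image_insert, e1, e2, Finset.pair_comm]
  · intro y hy ny
    have : ({{1}, {m}} : Finset (Finset ℕ)) ∪ y = insert {1} (insert {m} y) := by
      rw [Finset.insert_union, ← Finset.insert_eq]
    rw [this]
    exact nc_insert_single (nc_insert_single ny)
  · intro x hOK hsym
    constructor
    · intro ht
      rcases tag_cases hOK with ⟨h0, _⟩ | ⟨j, hj, hmem, hjt⟩
      · omega
      · have hj1 : j = 1 := by omega
        subst hj1
        rw [pair_one_one] at hmem
        have hmem2 : ({m} : Finset ℕ) ∈ x := by
          have := rf_mem hsym hmem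
          simpa [e1] using this
        refine ⟨?_, ?_⟩
        · intro B hB
          rcases Finset.mem_insert.1 hB with rfl | hB
          · exact hmem
          · rw [Finset.mem_singleton.1 hB]; exact hmem2
        · intro B hB hBE
          simp only [Finset.mem_insert, Finset.mem_singleton] at hBE
          push_neg at hBE
          refine interior_of_no_boundary hOK hB ?_ ?_
          · intro h1B
            exact (Finset.disjoint_left.1 (hOK.disj B hB _ hmem hBE.1) h1B) (by simp)
          · intro hmB
            exact (Finset.disjoint_left.1 (hOK.disj B hB _ hmem2 hBE.2) hmB) (by simp)
    · rintro ⟨hEs, _⟩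
      have hmem : ({1} : Finset ℕ) ∈ x := hEs (by simp)
      rw [← pair_one_one] at hmem
      exact tag_eq_of_mem hOK le_rfl hmem

theorem card_fiberm {m : ℕ} (hm : 2 ≤ m) :
    ((Sym m).filter (fun x => tag x = m)).card = (Sym (m - 2)).card := by
  have h1m : (1 : ℕ) ≠ m := by omega
  have e1 : m + 1 - 1 = m := by omega
  have e2 : m + 1 - m = 1 := by omega
  apply card_fiber_E hm m ({{1, m}} : Finset (Finset ℕ))
  · intro B hB
    rw [Finset.mem_singleton.1 hB]
  · intro B hB
    rw [Finset.mem_singleton.1 hB]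
    right
    exact Finset.card_pair h1m
  · intro B hB C hC hne
    exact absurd ((Finset.mem_singleton.1 hB).trans (Finset.mem_singleton.1 hC).symm) hne
  · simp [rf, Finset.image_insert, e1, e2, Finset.pair_comm]
  · intro y hy ny
    have : ({{1, m}} : Finset (Finset ℕ)) ∪ y = insert {1, m} y := (Finset.insert_eq _ _).symm
    rw [this]
    refine nc_insert_arc (by omega) ?_ ny
    intro B hB
    right; left
    intro u hu
    have := Finset.mem_Icc.1 (hy B hB hu)
    omega
  · intro x hOK hsym
    constructor
    · intro ht
      rcases tag_cases hOK with ⟨h0, _⟩ | ⟨j, hj, hmem, hjt⟩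
      · omega
      · have hjm : j = m := by omega
        subst hjm
        refine ⟨Finset.singleton_subset_iff.2 hmem, ?_⟩
        intro B hB hBE
        rw [Finset.mem_singleton] at hBE
        refine interior_of_no_boundary hOK hB ?_ ?_
        · intro h1B
          exact (Finset.disjoint_left.1 (hOK.disj B hB _ hmem hBE) h1B) (by simp)
        · intro hmB
          exact (Finset.disjoint_left.1 (hOK.disj B hB _ hmem hBE) hmB) (by simp)
    · rintro ⟨hEs, _⟩
      exact tag_eq_of_mem hOK (by omega) (hEs (by simp))

theorem OK.nonempty {a b : ℕ} {x : Finset (Finset ℕ)} (h : OK a b x) {B : Finset ℕ}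
    (hB : B ∈ x) : B.Nonempty :=
  Finset.card_pos.1 (by rcases h.cd B hB with hc | hc <;> omega)

theorem rf_insert (m : ℕ) (A : Finset ℕ) (s : Finset (Finset ℕ)) :
    rf m (insert A s) = insert (A.image (fun i => m + 1 - i)) (rf m s) :=
  Finset.image_insert _ _ _

theorem decomp_j {m j : ℕ} {x : Finset (Finset ℕ)} (hOK : OK 1 m x) (hsym : rf m x = x)
    (hj2 : 2 ≤ j) (hjm : 2 * j ≤ m) (hmem : ({1, j} : Finset ℕ) ∈ x) :
    (({m + 1 - j, m} : Finset ℕ) ∈ x) ∧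
    ∀ B ∈ x, B = ({1, j} : Finset ℕ) ∨ B = ({m + 1 - j, m} : Finset ℕ) ∨
      B ⊆ Finset.Icc 2 (j - 1) ∨ B ⊆ Finset.Icc (j + 1) (m - j) ∨
      B ⊆ Finset.Icc (m + 2 - j) (m - 1) := by
  have hmem2 : ({m + 1 - j, m} : Finset ℕ) ∈ x := by
    have := rf_mem hsym hmem
    rw [rf_pair] at this
    have e1 : m + 1 - 1 = m := by omega
    rw [e1, Finset.pair_comm] at this
    exact this
  refine ⟨hmem2, ?_⟩
  intro B hB
  by_cases hB1 : B = ({1, j} : Finset ℕ)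
  · exact Or.inl hB1
  by_cases hB2 : B = ({m + 1 - j, m} : Finset ℕ)
  · exact Or.inr (Or.inl hB2)
  obtain ⟨u, v, huv, hu1, hvm, rfl⟩ := hOK.shape hB
  have hd1 := hOK.disj _ hB _ hmem hB1
  have hd2 := hOK.disj _ hB _ hmem2 hB2
  have humem : u ∈ ({u, v} : Finset ℕ) := by simp
  have hvmem : v ∈ ({u, v} : Finset ℕ) := by simp
  have hu_ne : u ≠ 1 ∧ u ≠ j ∧ u ≠ m + 1 - j ∧ u ≠ m := by
    refine ⟨?_, ?_, ?_, ?_⟩ <;> intro he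
    · exact (Finset.disjoint_left.1 hd1 humem) (by rw [he]; simp)
    · exact (Finset.disjoint_left.1 hd1 humem) (by rw [he]; simp)
    · exact (Finset.disjoint_left.1 hd2 humem) (by rw [he]; simp)
    · exact (Finset.disjoint_left.1 hd2 humem) (by rw [he]; simp)
  have hv_ne : v ≠ 1 ∧ v ≠ j ∧ v ≠ m + 1 - j ∧ v ≠ m := by
    refine ⟨?_, ?_, ?_, ?_⟩ <;> intro he
    · exact (Finset.disjoint_left.1 hd1 hvmem) (by rw [he]; simp)
    · exact (Finset.disjoint_left.1 hd1 hvmem) (by rw [he]; simp)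
    · exact (Finset.disjoint_left.1 hd2 hvmem) (by rw [he]; simp)
    · exact (Finset.disjoint_left.1 hd2 hvmem) (by rw [he]; simp)
  have hstrad1 : ¬(u < j ∧ j < v) := by
    rintro ⟨h1, h2⟩
    exact hOK.nc 1 j u v hmem hB (by omega) h1 h2
  have hstrad2 : ¬(u < m + 1 - j ∧ m + 1 - j < v) := by
    rintro ⟨h1, h2⟩
    exact hOK.nc u v (m + 1 - j) m hB hmem2 h1 h2 (by omega)
  have hsub : ∀ c d : ℕ, c ≤ u → v ≤ d → ({u, v} : Finset ℕ) ⊆ Finset.Icc c d := by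
    intro c d h1 h2 t ht
    simp only [Finset.mem_insert, Finset.mem_singleton] at ht
    rw [Finset.mem_Icc]
    omega
  by_cases hvj : v < j
  · exact Or.inr (Or.inr (Or.inl (hsub _ _ (by omega) (by omega))))
  · have huj : j < u := by
      rcases Nat.lt_or_ge u j with h | h
      · exact absurd ⟨h, by omega⟩ hstrad1
      · omega
    by_cases hvmj : v < m + 1 - j
    · exact Or.inr (Or.inr (Or.inr (Or.inl (hsub _ _ (by omega) (by omega)))))
    · have humj : m + 1 - j < u := by
        rcases Nat.lt_or_ge u (m + 1 - j) with h | h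
        · exact absurd ⟨h, by omega⟩ hstrad2
        · omega
      exact Or.inr (Or.inr (Or.inr (Or.inr (hsub _ _ (by omega) (by omega)))))

theorem build_j {m j : ℕ} (hj2 : 2 ≤ j) (hjm : 2 * j ≤ m) {y z : Finset (Finset ℕ)}
    (hy : y ∈ Configs (j - 2)) (hz : z ∈ Sym (m - 2 * j)) :
    insert ({1, j} : Finset ℕ) (insert ({m + 1 - j, m} : Finset ℕ)
        (up 1 y ∪ (up j z ∪ rf m (up 1 y)))) ∈ (Sym m).filter (fun x => tag x = j) := by
  have hyOK : OK 1 (j - 2) y := mem_Configs.1 hy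
  obtain ⟨hzOK, hzsym⟩ := mem_Sym.1 hz
  set L' := up 1 y with hL'
  set M' := up j z with hM'
  set R' := rf m (up 1 y) with hR'
  have hL : OK 2 (j - 1) L' := by
    have := hyOK.up' (d := 1)
    have e1 : j - 2 + 1 = j - 1 := by omega
    rwa [e1] at this
  have hM : OK (j + 1) (m - j) M' := by
    have := hzOK.up' (d := j)
    have e1 : 1 + j = j + 1 := by omega
    have e2 : m - 2 * j + j = m - j := by omega
    rwa [e1, e2] at this
  have hR : OK (m + 2 - j) (m - 1) R' := by
    have := hL.rf' (m := m) (by omega)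
    have e1 : m + 1 - (j - 1) = m + 2 - j := by omega
    have e2 : m + 1 - 2 = m - 1 := by omega
    rwa [e1, e2] at this
  have hLb : ∀ B ∈ L', ∀ t ∈ B, 2 ≤ t ∧ t ≤ j - 1 := fun B hB t ht =>
    Finset.mem_Icc.1 (hL.sub B hB ht)
  have hMb : ∀ B ∈ M', ∀ t ∈ B, j + 1 ≤ t ∧ t ≤ m - j := fun B hB t ht =>
    Finset.mem_Icc.1 (hM.sub B hB ht)
  have hRb : ∀ B ∈ R', ∀ t ∈ B, m + 2 - j ≤ t ∧ t ≤ m - 1 := fun B hB t ht =>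
    Finset.mem_Icc.1 (hR.sub B hB ht)
  have hMR : OK (j + 1) (m - 1) (M' ∪ R') := hM.union hR (by omega) (by omega) (by omega)
  have hU : OK 2 (m - 1) (L' ∪ (M' ∪ R')) := hL.union hMR (by omega) (by omega) (by omega)
  have hUelem : ∀ C ∈ L' ∪ (M' ∪ R'), ∀ t ∈ C,
      2 ≤ t ∧ t ≤ m - 1 ∧ t ≠ j ∧ t ≠ m + 1 - j := by
    intro C hC t ht
    rcases Finset.mem_union.1 hC with h | h
    · have := hLb C h t ht; omega
    · rcases Finset.mem_union.1 h with h | h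
      · have := hMb C h t ht; omega
      · have := hRb C h t ht; omega
  have hOKX : OK 1 m (insert ({1, j} : Finset ℕ) (insert ({m + 1 - j, m} : Finset ℕ)
      (L' ∪ (M' ∪ R')))) := by
    constructor
    · intro B hB
      rcases Finset.mem_insert.1 hB with rfl | hB
      · intro t ht
        simp only [Finset.mem_insert, Finset.mem_singleton] at ht
        rw [Finset.mem_Icc]; omega
      rcases Finset.mem_insert.1 hB with rfl | hB
      · intro t ht
        simp only [Finset.mem_insert, Finset.mem_singleton] at ht
        rw [Finset.mem_Icc]; omega
      · exact (hU.sub B hB).trans (Finset.Icc_subset_Icc (by omega) (by omega))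
    · intro B hB
      rcases Finset.mem_insert.1 hB with rfl | hB
      · right; exact Finset.card_pair (by omega)
      rcases Finset.mem_insert.1 hB with rfl | hB
      · right; exact Finset.card_pair (by omega)
      · exact hU.cd B hB
    · intro B hB C hC hne
      have harc12 : Disjoint ({1, j} : Finset ℕ) ({m + 1 - j, m} : Finset ℕ) := by
        rw [Finset.disjoint_left]
        intro t h1 h2
        simp only [Finset.mem_insert, Finset.mem_singleton] at h1 h2
        omega
      have harcU : ∀ p q : ℕ, (p = 1 ∧ q = j) ∨ (p = m + 1 - j ∧ q = m) →
          ∀ C ∈ L' ∪ (M' ∪ R'), Disjoint ({p, q} : Finset ℕ) C := by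
        intro p q hpq C hC
        rw [Finset.disjoint_left]
        intro t h1 h2
        have := hUelem C hC t h2
        simp only [Finset.mem_insert, Finset.mem_singleton] at h1
        omega
      rcases Finset.mem_insert.1 hB with rfl | hB
      · rcases Finset.mem_insert.1 hC with rfl | hC
        · exact absurd rfl hne
        rcases Finset.mem_insert.1 hC with rfl | hC
        · exact harc12
        · exact harcU _ _ (Or.inl ⟨rfl, rfl⟩) C hC
      rcases Finset.mem_insert.1 hB with rfl | hB
      · rcases Finset.mem_insert.1 hC with rfl | hC
        · exact harc12.symm
        rcases Finset.mem_insert.1 hC with rfl | hC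
        · exact absurd rfl hne
        · exact harcU _ _ (Or.inr ⟨rfl, rfl⟩) C hC
      · rcases Finset.mem_insert.1 hC with rfl | hC
        · exact (harcU _ _ (Or.inl ⟨rfl, rfl⟩) B hB).symm
        rcases Finset.mem_insert.1 hC with rfl | hC
        · exact (harcU _ _ (Or.inr ⟨rfl, rfl⟩) B hB).symm
        · exact hU.disj B hB C hC hne
    · refine nc_insert_arc (by omega) ?_ ?_
      · intro B hB
        rcases Finset.mem_insert.1 hB with rfl | hB
        · right; right
          intro t ht
          simp only [Finset.mem_insert, Finset.mem_singleton] at ht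
          omega
        · rcases Finset.mem_union.1 hB with h | h
          · right; left
            intro t ht
            have := hLb B h t ht; omega
          · right; right
            intro t ht
            rcases Finset.mem_union.1 h with h | h
            · have := hMb B h t ht; omega
            · have := hRb B h t ht; omega
      · refine nc_insert_arc (by omega) ?_ hU.nc
        intro B hB
        rcases Finset.mem_union.1 hB with h | h
        · left
          intro t ht
          have := hLb B h t ht; omega
        · rcases Finset.mem_union.1 h with h | h
          · left
            intro t ht
            have := hMb B h t ht; omega
          · right; left
            intro t ht
            have := hRb B h t ht; omega
  have hrfX : rf m (insert ({1, j} : Finset ℕ) (insert ({m + 1 - j, m} : Finset ℕ)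
      (L' ∪ (M' ∪ R')))) = insert ({1, j} : Finset ℕ) (insert ({m + 1 - j, m} : Finset ℕ)
      (L' ∪ (M' ∪ R'))) := by
    rw [rf_insert, rf_insert, rf_union, rf_union]
    have e1 : (({1, j} : Finset ℕ)).image (fun i => m + 1 - i)
        = ({m + 1 - j, m} : Finset ℕ) := by
      rw [rf_pair]
      have : m + 1 - 1 = m := by omega
      rw [this, Finset.pair_comm]
    have e2 : (({m + 1 - j, m} : Finset ℕ)).image (fun i => m + 1 - i)
        = ({1, j} : Finset ℕ) := by
      rw [rf_pair]
      have e3 : m + 1 - (m + 1 - j) = j := by omega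
      have e4 : m + 1 - m = 1 := by omega
      rw [e3, e4, Finset.pair_comm]
    have e5 : rf m M' = M' := by
      have := rf_up (d := j) (m := m) (x := z) (by omega) ?_
      · have e : m - 2 * j = m - 2 * j := rfl
        rw [hM', this, hzsym]
      · intro B hB t ht
        have := Finset.mem_Icc.1 (hzOK.sub B hB ht)
        omega
    have e6 : rf m R' = L' := by
      rw [hR']
      apply rf_rf
      intro B hB t ht
      have := hLb B hB t ht
      omega
    rw [e1, e2, e5, e6]
    have hUeq : R' ∪ (M' ∪ L') = L' ∪ (M' ∪ R') := by
      ext B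
      simp only [Finset.mem_union]
      tauto
    rw [hUeq, Finset.insert_comm]
  refine Finset.mem_filter.2 ⟨mem_Sym.2 ⟨hOKX, hrfX⟩, ?_⟩
  exact tag_eq_of_mem hOKX (by omega) (Finset.mem_insert_self _ _)

theorem fiberj_unpack {m j : ℕ} {x : Finset (Finset ℕ)} (hj2 : 2 ≤ j)
    (hx : x ∈ (Sym m).filter (fun x => tag x = j)) :
    OK 1 m x ∧ rf m x = x ∧ ({1, j} : Finset ℕ) ∈ x := by
  obtain ⟨hxS, hxt⟩ := Finset.mem_filter.1 hx
  obtain ⟨hOK, hsym⟩ := mem_Sym.1 hxS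
  rcases tag_cases hOK with ⟨h0, _⟩ | ⟨j', hj', hmem, hjt⟩
  · omega
  · have : j' = j := by omega
    subst this
    exact ⟨hOK, hsym, hmem⟩

theorem card_fiberj {m j : ℕ} (hj2 : 2 ≤ j) (hjm : 2 * j ≤ m) :
    ((Sym m).filter (fun x => tag x = j)).card
      = ((Configs (j - 2)) ×ˢ (Sym (m - 2 * j))).card := by
  apply Finset.card_bij'
    (i := fun x _ => (dn 1 (x.filter (fun B => B ⊆ Finset.Icc 2 (j - 1))),
                      dn j (x.filter (fun B => B ⊆ Finset.Icc (j + 1) (m - j)))))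
    (j := fun p _ => insert ({1, j} : Finset ℕ) (insert ({m + 1 - j, m} : Finset ℕ)
      (up 1 p.1 ∪ (up j p.2 ∪ rf m (up 1 p.1)))))
  -- i maps into product
  · intro x hx
    obtain ⟨hOK, hsym, hmem⟩ := fiberj_unpack hj2 hx
    have hXL : OK 2 (j - 1) (x.filter (fun B => B ⊆ Finset.Icc 2 (j - 1))) :=
      hOK.mono (Finset.filter_subset _ _) (fun B hB => (Finset.mem_filter.1 hB).2)
    have hXM : OK (j + 1) (m - j) (x.filter (fun B => B ⊆ Finset.Icc (j + 1) (m - j))) :=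
      hOK.mono (Finset.filter_subset _ _) (fun B hB => (Finset.mem_filter.1 hB).2)
    rw [Finset.mem_product]
    constructor
    · apply mem_Configs.2
      have := hXL.dn' (show 1 < 2 by norm_num)
      have e1 : 2 - 1 = 1 := by omega
      have e2 : j - 1 - 1 = j - 2 := by omega
      rwa [e1, e2] at this
    · apply mem_Sym.2
      have hsymM : rf m (x.filter (fun B => B ⊆ Finset.Icc (j + 1) (m - j)))
          = x.filter (fun B => B ⊆ Finset.Icc (j + 1) (m - j)) := by
        apply rf_filter hOK hsym
        · intro u h1 h2; omega
        · intro u h1 h2; omega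
      constructor
      · have := hXM.dn' (show j < j + 1 by omega)
        have e1 : j + 1 - j = 1 := by omega
        have e2 : m - j - j = m - 2 * j := by omega
        rwa [e1, e2] at this
      · have := rf_dn (d := j) (m := m)
          (x := x.filter (fun B => B ⊆ Finset.Icc (j + 1) (m - j))) (by omega) ?_
        · rw [this, hsymM]
        · intro B hB t ht
          have := Finset.mem_Icc.1 (hXM.sub B hB ht)
          omega
  -- j maps into fiber
  · intro p hp
    rw [Finset.mem_product] at hp
    exact build_j hj2 hjm hp.1 hp.2
  -- left inverse
  · intro x hx
    obtain ⟨hOK, hsym, hmem⟩ := fiberj_unpack hj2 hx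
    obtain ⟨hmem2, hclass⟩ := decomp_j hOK hsym hj2 hjm hmem
    have hXL : OK 2 (j - 1) (x.filter (fun B => B ⊆ Finset.Icc 2 (j - 1))) :=
      hOK.mono (Finset.filter_subset _ _) (fun B hB => (Finset.mem_filter.1 hB).2)
    have hXM : OK (j + 1) (m - j) (x.filter (fun B => B ⊆ Finset.Icc (j + 1) (m - j))) :=
      hOK.mono (Finset.filter_subset _ _) (fun B hB => (Finset.mem_filter.1 hB).2)
    have eL : up 1 (dn 1 (x.filter (fun B => B ⊆ Finset.Icc 2 (j - 1))))
        = x.filter (fun B => B ⊆ Finset.Icc 2 (j - 1)) := by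
      apply up_dn
      intro B hB t ht
      have := Finset.mem_Icc.1 (hXL.sub B hB ht); omega
    have eM : up j (dn j (x.filter (fun B => B ⊆ Finset.Icc (j + 1) (m - j))))
        = x.filter (fun B => B ⊆ Finset.Icc (j + 1) (m - j)) := by
      apply up_dn
      intro B hB t ht
      have := Finset.mem_Icc.1 (hXM.sub B hB ht); omega
    have eR : rf m (x.filter (fun B => B ⊆ Finset.Icc 2 (j - 1)))
        = x.filter (fun B => B ⊆ Finset.Icc (m + 2 - j) (m - 1)) := by
      apply rf_filter hOK hsym
      · intro u h1 h2; omega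
      · intro u h1 h2; omega
    simp only
    rw [eL, eM, eR]
    ext B
    simp only [Finset.mem_insert, Finset.mem_union, Finset.mem_filter]
    constructor
    · rintro (rfl | rfl | ⟨hB, _⟩ | ⟨hB, _⟩ | ⟨hB, _⟩) <;> first | exact hmem | exact hmem2 | exact hB
    · intro hB
      rcases hclass B hB with h | h | h | h | h
      · exact Or.inl h
      · exact Or.inr (Or.inl h)
      · exact Or.inr (Or.inr (Or.inl ⟨hB, h⟩))
      · exact Or.inr (Or.inr (Or.inr (Or.inl ⟨hB, h⟩)))
      · exact Or.inr (Or.inr (Or.inr (Or.inr ⟨hB, h⟩)))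
  -- right inverse
  · intro p hp
    obtain ⟨y, z⟩ := p
    rw [Finset.mem_product] at hp
    obtain ⟨hy, hz⟩ := hp
    have hyOK : OK 1 (j - 2) y := mem_Configs.1 hy
    obtain ⟨hzOK, _⟩ := mem_Sym.1 hz
    have hL : OK 2 (j - 1) (up 1 y) := by
      have := hyOK.up' (d := 1)
      have e1 : j - 2 + 1 = j - 1 := by omega
      rwa [e1] at this
    have hM : OK (j + 1) (m - j) (up j z) := by
      have := hzOK.up' (d := j)
      have e1 : 1 + j = j + 1 := by omega
      have e2 : m - 2 * j + j = m - j := by omega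
      rwa [e1, e2] at this
    have hR : OK (m + 2 - j) (m - 1) (rf m (up 1 y)) := by
      have := hL.rf' (m := m) (by omega)
      have e1 : m + 1 - (j - 1) = m + 2 - j := by omega
      have e2 : m + 1 - 2 = m - 1 := by omega
      rwa [e1, e2] at this
    have notsub : ∀ {a b : ℕ} (w : Finset (Finset ℕ)), OK a b w → ∀ (c d : ℕ),
        (∀ t, a ≤ t → t ≤ b → ¬(c ≤ t ∧ t ≤ d)) →
        ∀ B ∈ w, ¬ B ⊆ Finset.Icc c d := by
      intro a b w hw c d hcd B hB hsub
      obtain ⟨u, hu⟩ := hw.nonempty hB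
      have h1 := Finset.mem_Icc.1 (hw.sub B hB hu)
      have h2 := Finset.mem_Icc.1 (hsub hu)
      exact hcd u h1.1 h1.2 h2
    have hA1L : ¬ ({1, j} : Finset ℕ) ⊆ Finset.Icc 2 (j - 1) := by
      intro hsub
      have := Finset.mem_Icc.1 (hsub (show (1:ℕ) ∈ ({1, j} : Finset ℕ) by simp))
      omega
    have hA2L : ¬ ({m + 1 - j, m} : Finset ℕ) ⊆ Finset.Icc 2 (j - 1) := by
      intro hsub
      have := Finset.mem_Icc.1 (hsub (show m ∈ ({m + 1 - j, m} : Finset ℕ) by simp))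
      omega
    have hA1M : ¬ ({1, j} : Finset ℕ) ⊆ Finset.Icc (j + 1) (m - j) := by
      intro hsub
      have := Finset.mem_Icc.1 (hsub (show (1:ℕ) ∈ ({1, j} : Finset ℕ) by simp))
      omega
    have hA2M : ¬ ({m + 1 - j, m} : Finset ℕ) ⊆ Finset.Icc (j + 1) (m - j) := by
      intro hsub
      have := Finset.mem_Icc.1 (hsub (show m ∈ ({m + 1 - j, m} : Finset ℕ) by simp))
      omega
    have f1 : (insert ({1, j} : Finset ℕ) (insert ({m + 1 - j, m} : Finset ℕ)
        (up 1 y ∪ (up j z ∪ rf m (up 1 y))))).filter (fun B => B ⊆ Finset.Icc 2 (j - 1))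
        = up 1 y := by
      rw [Finset.filter_insert, if_neg hA1L, Finset.filter_insert, if_neg hA2L,
        Finset.filter_union, Finset.filter_union,
        Finset.filter_true_of_mem hL.sub,
        Finset.filter_false_of_mem (notsub _ hM _ _ (by intro t h1 h2; omega)),
        Finset.filter_false_of_mem (notsub _ hR _ _ (by intro t h1 h2; omega)),
        Finset.empty_union, Finset.union_empty]
    have f2 : (insert ({1, j} : Finset ℕ) (insert ({m + 1 - j, m} : Finset ℕ)
        (up 1 y ∪ (up j z ∪ rf m (up 1 y))))).filter
          (fun B => B ⊆ Finset.Icc (j + 1) (m - j)) = up j z := by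
      rw [Finset.filter_insert, if_neg hA1M, Finset.filter_insert, if_neg hA2M,
        Finset.filter_union, Finset.filter_union,
        Finset.filter_true_of_mem hM.sub,
        Finset.filter_false_of_mem (notsub _ hL _ _ (by intro t h1 h2; omega)),
        Finset.filter_false_of_mem (notsub _ hR _ _ (by intro t h1 h2; omega)),
        Finset.union_empty, Finset.empty_union]
    simp only
    rw [f1, f2, dn_up, dn_up]

theorem OK.weaken {a b a' b' : ℕ} {x : Finset (Finset ℕ)} (h : OK a b x)
    (ha : a' ≤ a) (hb : b ≤ b') : OK a' b' x :=
  h.mono (le_refl x) (fun B hB => (h.sub B hB).trans (Finset.Icc_subset_Icc ha hb))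

theorem card_cfiber0 {n : ℕ} (hn : 1 ≤ n) :
    ((Configs n).filter (fun x => tag x = 0)).card = (Configs (n - 1)).card := by
  apply Finset.card_bij' (i := fun x _ => dn 1 x) (j := fun y _ => up 1 y)
  · intro x hx
    obtain ⟨hxC, hxt⟩ := Finset.mem_filter.1 hx
    have hOK := mem_Configs.1 hxC
    have h1 : ∀ B ∈ x, 1 ∉ B := by
      rcases tag_cases hOK with ⟨_, hall⟩ | ⟨j, hj, hmem, hjt⟩
      · exact hall
      · omega
    have hOK2 : OK 2 n x := hOK.mono (le_refl x) (fun B hB t ht => by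
      have := Finset.mem_Icc.1 (hOK.sub B hB ht)
      have := h1 B hB
      rw [Finset.mem_Icc]
      constructor
      · rcases Nat.lt_or_ge t 2 with h | h
        · exfalso; have : t = 1 := by omega
          subst this; exact (h1 B hB) ht
        · exact h
      · omega)
    apply mem_Configs.2
    have := hOK2.dn' (show 1 < 2 by norm_num)
    have e1 : 2 - 1 = 1 := by omega
    rwa [e1] at this
  · intro y hy
    have hyOK : OK 1 (n - 1) y := mem_Configs.1 hy
    have hU : OK 2 n (up 1 y) := by
      have := hyOK.up' (d := 1)
      have e : n - 1 + 1 = n := by omega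
      rwa [e] at this
    refine Finset.mem_filter.2 ⟨mem_Configs.2 (hU.weaken (by omega) le_rfl), ?_⟩
    apply tag_eq_zero
    intro B hB h1
    have := Finset.mem_Icc.1 (hU.sub B hB h1)
    omega
  · intro x hx
    obtain ⟨hxC, hxt⟩ := Finset.mem_filter.1 hx
    have hOK := mem_Configs.1 hxC
    have h1 : ∀ B ∈ x, 1 ∉ B := by
      rcases tag_cases hOK with ⟨_, hall⟩ | ⟨j, hj, hmem, hjt⟩
      · exact hall
      · omega
    apply up_dn
    intro B hB t ht
    have := Finset.mem_Icc.1 (hOK.sub B hB ht)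
    have h2 := h1 B hB
    rcases Nat.lt_or_ge t 1 with h | h
    · omega
    · rcases Nat.eq_or_lt_of_le h with h | h
      · exfalso; rw [← h] at ht; exact h2 ht
      · omega
  · intro y hy
    exact dn_up 1 y

theorem card_cfiber1 {n : ℕ} (hn : 1 ≤ n) :
    ((Configs n).filter (fun x => tag x = 1)).card = (Configs (n - 1)).card := by
  apply Finset.card_bij'
    (i := fun x _ => dn 1 (x.filter (fun B => B ⊆ Finset.Icc 2 n)))
    (j := fun y _ => insert ({1} : Finset ℕ) (up 1 y))
  · intro x hx
    obtain ⟨hxC, _⟩ := Finset.mem_filter.1 hx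
    have hOK := mem_Configs.1 hxC
    have hXOK : OK 2 n (x.filter (fun B => B ⊆ Finset.Icc 2 n)) :=
      hOK.mono (Finset.filter_subset _ _) (fun B hB => (Finset.mem_filter.1 hB).2)
    apply mem_Configs.2
    have := hXOK.dn' (show 1 < 2 by norm_num)
    have e1 : 2 - 1 = 1 := by omega
    rwa [e1] at this
  · intro y hy
    have hyOK : OK 1 (n - 1) y := mem_Configs.1 hy
    have hU : OK 2 n (up 1 y) := by
      have := hyOK.up' (d := 1)
      have e : n - 1 + 1 = n := by omega
      rwa [e] at this
    have hOKX : OK 1 n (insert ({1} : Finset ℕ) (up 1 y)) := by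
      constructor
      · intro B hB
        rcases Finset.mem_insert.1 hB with rfl | hB
        · intro t ht
          rw [Finset.mem_singleton.1 ht, Finset.mem_Icc]
          omega
        · exact (hU.sub B hB).trans (Finset.Icc_subset_Icc (by omega) le_rfl)
      · intro B hB
        rcases Finset.mem_insert.1 hB with rfl | hB
        · left; simp
        · exact hU.cd B hB
      · intro B hB C hC hne
        have key : ∀ C ∈ up 1 y, Disjoint ({1} : Finset ℕ) C := by
          intro C hC
          rw [Finset.disjoint_left]
          intro t h1 h2
          rw [Finset.mem_singleton.1 h1] at h2
          have := Finset.mem_Icc.1 (hU.sub C hC h2)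
          omega
        rcases Finset.mem_insert.1 hB with rfl | hB
        · rcases Finset.mem_insert.1 hC with rfl | hC
          · exact absurd rfl hne
          · exact key C hC
        · rcases Finset.mem_insert.1 hC with rfl | hC
          · exact (key B hB).symm
          · exact hU.disj B hB C hC hne
      · exact nc_insert_single hU.nc
    refine Finset.mem_filter.2 ⟨mem_Configs.2 hOKX, ?_⟩
    have : ({1, 1} : Finset ℕ) ∈ insert ({1} : Finset ℕ) (up 1 y) := by
      rw [pair_one_one]; exact Finset.mem_insert_self _ _
    exact tag_eq_of_mem hOKX le_rfl this
  · intro x hx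
    obtain ⟨hxC, hxt⟩ := Finset.mem_filter.1 hx
    have hOK := mem_Configs.1 hxC
    have hmem : ({1} : Finset ℕ) ∈ x := by
      rcases tag_cases hOK with ⟨h0, _⟩ | ⟨j, hj, hmem, hjt⟩
      · omega
      · have : j = 1 := by omega
        subst this
        rwa [pair_one_one] at hmem
    have hXOK : OK 2 n (x.filter (fun B => B ⊆ Finset.Icc 2 n)) :=
      hOK.mono (Finset.filter_subset _ _) (fun B hB => (Finset.mem_filter.1 hB).2)
    have eL : up 1 (dn 1 (x.filter (fun B => B ⊆ Finset.Icc 2 n)))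
        = x.filter (fun B => B ⊆ Finset.Icc 2 n) := by
      apply up_dn
      intro B hB t ht
      have := Finset.mem_Icc.1 (hXOK.sub B hB ht); omega
    rw [eL]
    ext B
    simp only [Finset.mem_insert, Finset.mem_filter]
    constructor
    · rintro (rfl | ⟨hB, _⟩)
      · exact hmem
      · exact hB
    · intro hB
      by_cases hB1 : B = ({1} : Finset ℕ)
      · exact Or.inl hB1
      · refine Or.inr ⟨hB, ?_⟩
        intro t ht
        have h2 := Finset.mem_Icc.1 (hOK.sub B hB ht)
        have h1 : t ≠ 1 := by
          rintro rfl
          exact (Finset.disjoint_left.1 (hOK.disj B hB _ hmem hB1) ht) (by simp)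
        rw [Finset.mem_Icc]
        omega
  · intro y hy
    have hyOK : OK 1 (n - 1) y := mem_Configs.1 hy
    have hU : OK 2 n (up 1 y) := by
      have := hyOK.up' (d := 1)
      have e : n - 1 + 1 = n := by omega
      rwa [e] at this
    have h1 : ¬ ({1} : Finset ℕ) ⊆ Finset.Icc 2 n := by
      intro hsub
      have := Finset.mem_Icc.1 (hsub (show (1:ℕ) ∈ ({1} : Finset ℕ) by simp))
      omega
    rw [Finset.filter_insert, if_neg h1, Finset.filter_true_of_mem hU.sub, dn_up]

theorem cdecomp_j {n j : ℕ} {x : Finset (Finset ℕ)} (hOK : OK 1 n x)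
    (hj2 : 2 ≤ j) (hjn : j ≤ n) (hmem : ({1, j} : Finset ℕ) ∈ x) :
    ∀ B ∈ x, B = ({1, j} : Finset ℕ) ∨
      B ⊆ Finset.Icc 2 (j - 1) ∨ B ⊆ Finset.Icc (j + 1) n := by
  intro B hB
  by_cases hB1 : B = ({1, j} : Finset ℕ)
  · exact Or.inl hB1
  obtain ⟨u, v, huv, hu1, hvn, rfl⟩ := hOK.shape hB
  have hd1 := hOK.disj _ hB _ hmem hB1
  have humem : u ∈ ({u, v} : Finset ℕ) := by simp
  have hvmem : v ∈ ({u, v} : Finset ℕ) := by simp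
  have hu_ne : u ≠ 1 ∧ u ≠ j := by
    constructor <;> intro he
    · exact (Finset.disjoint_left.1 hd1 humem) (by rw [he]; simp)
    · exact (Finset.disjoint_left.1 hd1 humem) (by rw [he]; simp)
  have hv_ne : v ≠ 1 ∧ v ≠ j := by
    constructor <;> intro he
    · exact (Finset.disjoint_left.1 hd1 hvmem) (by rw [he]; simp)
    · exact (Finset.disjoint_left.1 hd1 hvmem) (by rw [he]; simp)
  have hstrad : ¬(u < j ∧ j < v) := by
    rintro ⟨h1, h2⟩
    exact hOK.nc 1 j u v hmem hB (by omega) h1 h2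
  have hsub : ∀ c d : ℕ, c ≤ u → v ≤ d → ({u, v} : Finset ℕ) ⊆ Finset.Icc c d := by
    intro c d h1 h2 t ht
    simp only [Finset.mem_insert, Finset.mem_singleton] at ht
    rw [Finset.mem_Icc]
    omega
  by_cases hvj : v < j
  · exact Or.inr (Or.inl (hsub _ _ (by omega) (by omega)))
  · have huj : j < u := by
      rcases Nat.lt_or_ge u j with h | h
      · exact absurd ⟨h, by omega⟩ hstrad
      · omega
    exact Or.inr (Or.inr (hsub _ _ (by omega) (by omega)))

theorem card_cfiberj {n j : ℕ} (hj2 : 2 ≤ j) (hjn : j ≤ n) :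
    ((Configs n).filter (fun x => tag x = j)).card
      = ((Configs (j - 2)) ×ˢ (Configs (n - j))).card := by
  have unpack : ∀ x ∈ (Configs n).filter (fun x => tag x = j),
      OK 1 n x ∧ ({1, j} : Finset ℕ) ∈ x := by
    intro x hx
    obtain ⟨hxC, hxt⟩ := Finset.mem_filter.1 hx
    have hOK := mem_Configs.1 hxC
    rcases tag_cases hOK with ⟨h0, _⟩ | ⟨j', hj', hmem, hjt⟩
    · omega
    · have : j' = j := by omega
      subst this
      exact ⟨hOK, hmem⟩
  have buildOK : ∀ y z : Finset (Finset ℕ), y ∈ Configs (j - 2) → z ∈ Configs (n - j) →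
      OK 1 n (insert ({1, j} : Finset ℕ) (up 1 y ∪ up j z)) ∧
      OK 2 (j - 1) (up 1 y) ∧ OK (j + 1) n (up j z) := by
    intro y z hy hz
    have hyOK : OK 1 (j - 2) y := mem_Configs.1 hy
    have hzOK : OK 1 (n - j) z := mem_Configs.1 hz
    have hL : OK 2 (j - 1) (up 1 y) := by
      have := hyOK.up' (d := 1)
      have e1 : j - 2 + 1 = j - 1 := by omega
      rwa [e1] at this
    have hM : OK (j + 1) n (up j z) := by
      have := hzOK.up' (d := j)
      have e1 : 1 + j = j + 1 := by omega
      have e2 : n - j + j = n := by omega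
      rwa [e1, e2] at this
    have hU : OK 2 n (up 1 y ∪ up j z) := hL.union hM (by omega) (by omega) (by omega)
    refine ⟨?_, hL, hM⟩
    constructor
    · intro B hB
      rcases Finset.mem_insert.1 hB with rfl | hB
      · intro t ht
        simp only [Finset.mem_insert, Finset.mem_singleton] at ht
        rw [Finset.mem_Icc]; omega
      · exact (hU.sub B hB).trans (Finset.Icc_subset_Icc (by omega) le_rfl)
    · intro B hB
      rcases Finset.mem_insert.1 hB with rfl | hB
      · right; exact Finset.card_pair (by omega)
      · exact hU.cd B hB
    · intro B hB C hC hne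
      have key : ∀ C ∈ up 1 y ∪ up j z, Disjoint ({1, j} : Finset ℕ) C := by
        intro C hC
        rw [Finset.disjoint_left]
        intro t h1 h2
        simp only [Finset.mem_insert, Finset.mem_singleton] at h1
        rcases Finset.mem_union.1 hC with h | h
        · have := Finset.mem_Icc.1 (hL.sub C h h2); omega
        · have := Finset.mem_Icc.1 (hM.sub C h h2); omega
      rcases Finset.mem_insert.1 hB with rfl | hB
      · rcases Finset.mem_insert.1 hC with rfl | hC
        · exact absurd rfl hne
        · exact key C hC
      · rcases Finset.mem_insert.1 hC with rfl | hC
        · exact (key B hB).symm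
        · exact hU.disj B hB C hC hne
    · refine nc_insert_arc (by omega) ?_ hU.nc
      intro B hB
      rcases Finset.mem_union.1 hB with h | h
      · right; left
        intro t ht
        have := Finset.mem_Icc.1 (hL.sub B h ht); omega
      · right; right
        intro t ht
        have := Finset.mem_Icc.1 (hM.sub B h ht); omega
  apply Finset.card_bij'
    (i := fun x _ => (dn 1 (x.filter (fun B => B ⊆ Finset.Icc 2 (j - 1))),
                      dn j (x.filter (fun B => B ⊆ Finset.Icc (j + 1) n))))
    (j := fun p _ => insert ({1, j} : Finset ℕ) (up 1 p.1 ∪ up j p.2))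
  · intro x hx
    obtain ⟨hOK, hmem⟩ := unpack x hx
    have hXL : OK 2 (j - 1) (x.filter (fun B => B ⊆ Finset.Icc 2 (j - 1))) :=
      hOK.mono (Finset.filter_subset _ _) (fun B hB => (Finset.mem_filter.1 hB).2)
    have hXM : OK (j + 1) n (x.filter (fun B => B ⊆ Finset.Icc (j + 1) n)) :=
      hOK.mono (Finset.filter_subset _ _) (fun B hB => (Finset.mem_filter.1 hB).2)
    rw [Finset.mem_product]
    constructor
    · apply mem_Configs.2
      have := hXL.dn' (show 1 < 2 by norm_num)
      have e1 : 2 - 1 = 1 := by omega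
      have e2 : j - 1 - 1 = j - 2 := by omega
      rwa [e1, e2] at this
    · apply mem_Configs.2
      have := hXM.dn' (show j < j + 1 by omega)
      have e1 : j + 1 - j = 1 := by omega
      rwa [e1] at this
  · intro p hp
    rw [Finset.mem_product] at hp
    obtain ⟨hOKX, hL, hM⟩ := buildOK p.1 p.2 hp.1 hp.2
    refine Finset.mem_filter.2 ⟨mem_Configs.2 hOKX, ?_⟩
    exact tag_eq_of_mem hOKX (by omega) (Finset.mem_insert_self _ _)
  · intro x hx
    obtain ⟨hOK, hmem⟩ := unpack x hx
    have hclass := cdecomp_j hOK hj2 hjn hmem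
    have hXL : OK 2 (j - 1) (x.filter (fun B => B ⊆ Finset.Icc 2 (j - 1))) :=
      hOK.mono (Finset.filter_subset _ _) (fun B hB => (Finset.mem_filter.1 hB).2)
    have hXM : OK (j + 1) n (x.filter (fun B => B ⊆ Finset.Icc (j + 1) n)) :=
      hOK.mono (Finset.filter_subset _ _) (fun B hB => (Finset.mem_filter.1 hB).2)
    have eL : up 1 (dn 1 (x.filter (fun B => B ⊆ Finset.Icc 2 (j - 1))))
        = x.filter (fun B => B ⊆ Finset.Icc 2 (j - 1)) := by
      apply up_dn
      intro B hB t ht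
      have := Finset.mem_Icc.1 (hXL.sub B hB ht); omega
    have eM : up j (dn j (x.filter (fun B => B ⊆ Finset.Icc (j + 1) n)))
        = x.filter (fun B => B ⊆ Finset.Icc (j + 1) n) := by
      apply up_dn
      intro B hB t ht
      have := Finset.mem_Icc.1 (hXM.sub B hB ht); omega
    simp only
    rw [eL, eM]
    ext B
    simp only [Finset.mem_insert, Finset.mem_union, Finset.mem_filter]
    constructor
    · rintro (rfl | ⟨hB, _⟩ | ⟨hB, _⟩) <;> first | exact hmem | exact hB
    · intro hB
      rcases hclass B hB with h | h | h
      · exact Or.inl h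
      · exact Or.inr (Or.inl ⟨hB, h⟩)
      · exact Or.inr (Or.inr ⟨hB, h⟩)
  · intro p hp
    obtain ⟨y, z⟩ := p
    rw [Finset.mem_product] at hp
    obtain ⟨hOKX, hL, hM⟩ := buildOK y z hp.1 hp.2
    have hA1L : ¬ ({1, j} : Finset ℕ) ⊆ Finset.Icc 2 (j - 1) := by
      intro hsub
      have := Finset.mem_Icc.1 (hsub (show (1:ℕ) ∈ ({1, j} : Finset ℕ) by simp))
      omega
    have hA1M : ¬ ({1, j} : Finset ℕ) ⊆ Finset.Icc (j + 1) n := by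
      intro hsub
      have := Finset.mem_Icc.1 (hsub (show (1:ℕ) ∈ ({1, j} : Finset ℕ) by simp))
      omega
    have hML : ∀ B ∈ up j z, ¬ B ⊆ Finset.Icc 2 (j - 1) := by
      intro B hB hsub
      obtain ⟨u, hu⟩ := hM.nonempty hB
      have h1 := Finset.mem_Icc.1 (hM.sub B hB hu)
      have h2 := Finset.mem_Icc.1 (hsub hu)
      omega
    have hLM : ∀ B ∈ up 1 y, ¬ B ⊆ Finset.Icc (j + 1) n := by
      intro B hB hsub
      obtain ⟨u, hu⟩ := hL.nonempty hB
      have h1 := Finset.mem_Icc.1 (hL.sub B hB hu)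
      have h2 := Finset.mem_Icc.1 (hsub hu)
      omega
    simp only
    rw [Finset.filter_insert, if_neg hA1L, Finset.filter_insert, if_neg hA1M,
      Finset.filter_union, Finset.filter_union,
      Finset.filter_true_of_mem hL.sub, Finset.filter_true_of_mem hM.sub,
      Finset.filter_false_of_mem hML, Finset.filter_false_of_mem hLM,
      Finset.union_empty, Finset.empty_union, dn_up, dn_up]

theorem sym_rec {m : ℕ} (hm : 2 ≤ m) :
    (Sym m).card = 3 * (Sym (m - 2)).card
      + ∑ i ∈ Finset.Icc 2 (m / 2), (Configs (i - 2)).card * (Sym (m - 2 * i)).card := by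
  have T := insert 0 (insert 1 (insert m (Finset.Icc 2 (m / 2))))
  have hmap : ∀ x ∈ Sym m, tag x ∈ insert 0 (insert 1 (insert m (Finset.Icc 2 (m / 2)))) := by
    intro x hx
    obtain ⟨hOK, hsym⟩ := mem_Sym.1 hx
    rcases tag_cases hOK with ⟨h0, _⟩ | ⟨j, hj, hmem, hjt⟩
    · rw [h0]; simp
    · rw [hjt]
      by_cases hj1 : j = 1
      · subst hj1; simp
      by_cases hjm : j = m
      · subst hjm; simp
      -- 2 ≤ j ≤ m-1, show j ≤ m/2
      have hj2 : 2 ≤ j := by omega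
      have hjlt : j < m := by
        have := Finset.mem_Icc.1 (hOK.sub _ hmem (show j ∈ ({1, j} : Finset ℕ) by simp))
        omega
      have hmem2 : ({m + 1 - j, m} : Finset ℕ) ∈ x := by
        have := rf_mem hsym hmem
        rw [rf_pair] at this
        have e1 : m + 1 - 1 = m := by omega
        rw [e1, Finset.pair_comm] at this
        exact this
      have hne : ({1, j} : Finset ℕ) ≠ ({m + 1 - j, m} : Finset ℕ) := by
        intro he
        have : (1 : ℕ) ∈ ({m + 1 - j, m} : Finset ℕ) := he ▸ (by simp)
        simp only [Finset.mem_insert, Finset.mem_singleton] at this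
        omega
      have hdisj := hOK.disj _ hmem _ hmem2 hne
      have hjne : j ≠ m + 1 - j := by
        intro he
        exact (Finset.disjoint_left.1 hdisj (show j ∈ ({1, j} : Finset ℕ) by simp))
          (by rw [← he]; simp)
      have hnc : ¬ (m + 1 - j < j) := by
        intro hlt
        exact hOK.nc 1 j (m + 1 - j) m hmem hmem2 (by omega) hlt (by omega)
      simp only [Finset.mem_insert, Finset.mem_Icc]
      right; right; right
      omega
  rw [Finset.card_eq_sum_card_fiberwise hmap]
  have h0n : (0 : ℕ) ∉ insert 1 (insert m (Finset.Icc 2 (m / 2))) := by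
    simp only [Finset.mem_insert, Finset.mem_Icc]
    omega
  have h1n : (1 : ℕ) ∉ insert m (Finset.Icc 2 (m / 2)) := by
    simp only [Finset.mem_insert, Finset.mem_Icc]
    omega
  have hmn : m ∉ Finset.Icc 2 (m / 2) := by
    simp only [Finset.mem_Icc]
    omega
  rw [Finset.sum_insert h0n, Finset.sum_insert h1n, Finset.sum_insert hmn,
    card_fiber0 hm, card_fiber1 hm, card_fiberm hm]
  have hsum : ∑ i ∈ Finset.Icc 2 (m / 2), ((Sym m).filter (fun x => tag x = i)).card
      = ∑ i ∈ Finset.Icc 2 (m / 2), (Configs (i - 2)).card * (Sym (m - 2 * i)).card := by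
    apply Finset.sum_congr rfl
    intro i hi
    have hi2 := Finset.mem_Icc.1 hi
    rw [card_fiberj hi2.1 (by omega), Finset.card_product]
  rw [hsum]
  ring

theorem conf_rec {n : ℕ} (hn : 1 ≤ n) :
    (Configs n).card = 2 * (Configs (n - 1)).card
      + ∑ j ∈ Finset.Icc 2 n, (Configs (j - 2)).card * (Configs (n - j)).card := by
  have hmap : ∀ x ∈ Configs n, tag x ∈ insert 0 (insert 1 (Finset.Icc 2 n)) := by
    intro x hx
    have hOK := mem_Configs.1 hx
    rcases tag_cases hOK with ⟨h0, _⟩ | ⟨j, hj, hmem, hjt⟩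
    · rw [h0]; simp
    · rw [hjt]
      by_cases hj1 : j = 1
      · subst hj1; simp
      have hjn : j ≤ n := by
        have := Finset.mem_Icc.1 (hOK.sub _ hmem (show j ∈ ({1, j} : Finset ℕ) by simp))
        omega
      simp only [Finset.mem_insert, Finset.mem_Icc]
      right; right
      omega
  rw [Finset.card_eq_sum_card_fiberwise hmap]
  have h0n : (0 : ℕ) ∉ insert 1 (Finset.Icc 2 n) := by
    simp only [Finset.mem_insert, Finset.mem_Icc]
    omega
  have h1n : (1 : ℕ) ∉ Finset.Icc 2 n := by
    simp only [Finset.mem_Icc]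
    omega
  rw [Finset.sum_insert h0n, Finset.sum_insert h1n, card_cfiber0 hn, card_cfiber1 hn]
  have hsum : ∑ i ∈ Finset.Icc 2 n, ((Configs n).filter (fun x => tag x = i)).card
      = ∑ i ∈ Finset.Icc 2 n, (Configs (i - 2)).card * (Configs (n - i)).card := by
    apply Finset.sum_congr rfl
    intro i hi
    have hi2 := Finset.mem_Icc.1 hi
    rw [card_cfiberj hi2.1 hi2.2, Finset.card_product]
  rw [hsum]
  ring

theorem configs_zero : Configs 0 = ({∅} : Finset (Finset (Finset ℕ))) := by
  ext x
  rw [mem_Configs, Finset.mem_singleton]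
  constructor
  · intro h
    rw [Finset.eq_empty_iff_forall_notMem]
    intro B hB
    obtain ⟨u, hu⟩ := h.nonempty hB
    have := Finset.mem_Icc.1 (h.sub B hB hu)
    omega
  · rintro rfl
    exact ⟨by simp, by simp, by simp, fun _ _ _ _ h => by simp at h⟩

theorem card_Configs : ∀ n : ℕ, (Configs n).card = catalan (n + 1) := by
  intro n
  induction n using Nat.strong_induction_on with
  | _ n ih =>
    match n with
    | 0 => rw [configs_zero]; simp [catalan_one]
    | Nat.succ k =>
      rw [conf_rec (by omega)]
      have e1 : k + 1 - 1 = k := by omega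
      rw [e1, ih k (by omega)]
      have hsum : ∑ j ∈ Finset.Icc 2 (k + 1), (Configs (j - 2)).card * (Configs (k + 1 - j)).card
          = ∑ i ∈ Finset.Icc 1 k, catalan i * catalan (k + 1 - i) := by
        apply Finset.sum_nbij' (i := fun j => j - 1) (j := fun i => i + 1)
        · intro j hj
          have := Finset.mem_Icc.1 hj
          rw [Finset.mem_Icc]
          omega
        · intro i hi
          have := Finset.mem_Icc.1 hi
          rw [Finset.mem_Icc]
          omega
        · intro j hj
          have := Finset.mem_Icc.1 hj
          omega
        · intro i hi
          omega
        · intro j hj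
          have hj2 := Finset.mem_Icc.1 hj
          rw [ih (j - 2) (by omega), ih (k + 1 - j) (by omega)]
          have e2 : j - 2 + 1 = j - 1 := by omega
          have e3 : k + 1 - j + 1 = k + 1 - (j - 1) := by omega
          rw [e2, e3]
      rw [hsum]
      have hcat : catalan (k + 1 + 1) = ∑ i ∈ Finset.range (k + 2), catalan i * catalan (k + 1 - i) := by
        rw [catalan_succ, Finset.sum_range]
      rw [hcat]
      have hrange : Finset.range (k + 2) = insert 0 (insert (k + 1) (Finset.Icc 1 k)) := by
        ext i
        simp only [Finset.mem_range, Finset.mem_insert, Finset.mem_Icc]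
        omega
      rw [hrange, Finset.sum_insert (by simp only [Finset.mem_insert, Finset.mem_Icc]; omega),
        Finset.sum_insert (by simp only [Finset.mem_Icc]; omega)]
      rw [catalan_zero]
      have e4 : k + 1 - 0 = k + 1 := by omega
      have e5 : k + 1 - (k + 1) = 0 := by omega
      rw [e4, e5, catalan_zero]
      ring

theorem sym_zero : Sym 0 = ({∅} : Finset (Finset (Finset ℕ))) := by
  ext x
  rw [mem_Sym, Finset.mem_singleton]
  constructor
  · intro h
    rw [Finset.eq_empty_iff_forall_notMem]
    intro B hB
    obtain ⟨u, hu⟩ := h.1.nonempty hB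
    have := Finset.mem_Icc.1 (h.1.sub B hB hu)
    omega
  · rintro rfl
    refine ⟨⟨by simp, by simp, by simp, fun _ _ _ _ h => by simp at h⟩, by simp [rf]⟩

theorem sym_one : Sym 1 = ({∅, {{1}}} : Finset (Finset (Finset ℕ))) := by
  ext x
  rw [mem_Sym, Finset.mem_insert, Finset.mem_singleton]
  constructor
  · intro h
    have hx : x ⊆ {{1}} := by
      intro B hB
      rw [Finset.mem_singleton]
      have hsub : B ⊆ Finset.Icc 1 1 := h.1.sub B hB
      have : Finset.Icc 1 1 = ({1} : Finset ℕ) := by simp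
      rw [this] at hsub
      obtain ⟨u, hu⟩ := h.1.nonempty hB
      have hu1 := Finset.mem_singleton.1 (hsub hu)
      subst hu1
      apply Finset.Subset.antisymm hsub
      intro t ht
      rw [Finset.mem_singleton.1 ht]
      exact hu
    rcases Finset.subset_singleton_iff.1 hx with h | h
    · exact Or.inl h
    · exact Or.inr h
  · rintro (rfl | rfl)
    · exact ⟨⟨by simp, by simp, by simp, fun _ _ _ _ h => by simp at h⟩, by simp [rf]⟩
    · constructor
      · refine ⟨?_, ?_, ?_, ?_⟩
        · intro B hB
          rw [Finset.mem_singleton.1 hB]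
          intro t ht
          rw [Finset.mem_singleton.1 ht]
          simp
        · intro B hB
          rw [Finset.mem_singleton.1 hB]
          left; simp
        · intro B hB C hC hne
          rw [Finset.mem_singleton.1 hB, Finset.mem_singleton.1 hC] at hne
          exact absurd rfl hne
        · intro i₁ j₁ i₂ j₂ h1 h2 l1 l2 l3
          have hi : i₁ ∈ ({1} : Finset ℕ) :=
            (Finset.mem_singleton.1 h1) ▸ (by simp : i₁ ∈ ({i₁, j₁} : Finset ℕ))
          have hj : j₁ ∈ ({1} : Finset ℕ) :=
            (Finset.mem_singleton.1 h1) ▸ (by simp : j₁ ∈ ({i₁, j₁} : Finset ℕ))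
          rw [Finset.mem_singleton] at hi hj
          omega
      · simp [rf]

end NC

theorem fixed_configs_recurrence (F : ℕ → ℕ)
    (hF : ∀ m, F m = ((Configs m).filter fun x =>
      x.image (fun B => B.image fun i => m + 1 - i) = x).card) :
    F 0 = 1 ∧ F 1 = 2 ∧ F 2 = 3 ∧ F 3 = 6 ∧
    ∀ m, 4 ≤ m →
      F m = 3 * F (m - 2) + ∑ i ∈ Finset.Icc 2 (m / 2), catalan (i - 1) * F (m - 2 * i) := by
  have hFS : ∀ m, F m = (NC.Sym m).card := hF
  have h0 : F 0 = 1 := by rw [hFS, NC.sym_zero]; simp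
  have h1 : F 1 = 2 := by
    rw [hFS, NC.sym_one]
    rw [Finset.card_insert_of_notMem
      (fun h => absurd (Finset.mem_singleton.1 h).symm (Finset.singleton_ne_empty _)),
      Finset.card_singleton]
  have empty21 : Finset.Icc 2 1 = (∅ : Finset ℕ) := by
    apply Finset.Icc_eq_empty
    omega
  have h2 : F 2 = 3 := by
    rw [hFS, NC.sym_rec (le_refl 2)]
    norm_num [empty21, NC.sym_zero]
  have h3 : F 3 = 6 := by
    rw [hFS, NC.sym_rec (by omega : 2 ≤ 3)]
    have : (3:ℕ) / 2 = 1 := by omega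
    rw [this, empty21]
    rw [show (3:ℕ) - 2 = 1 by omega, NC.sym_one]
    rw [Finset.card_insert_of_notMem
      (fun h => absurd (Finset.mem_singleton.1 h).symm (Finset.singleton_ne_empty _)),
      Finset.card_singleton]
    simp
  refine ⟨h0, h1, h2, h3, ?_⟩
  intro m hm
  rw [hFS, NC.sym_rec (by omega : 2 ≤ m), ← hFS]
  congr 1
  apply Finset.sum_congr rfl
  intro i hi
  have hi2 := Finset.mem_Icc.1 hi
  rw [NC.card_Configs (i - 2), ← hFS]
  have e : i - 2 + 1 = i - 1 := by omega
  rw [e]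
end

section
/- Define F(m) by F(0)=1, F(1)=2, F(2)=3, F(3)=6 and, for m ≥ 4, F(m) = 3F(m−2) + Σ_{i=2}^{⌊m/2⌋} Cat_{i−1}·F(m−2i). Then for all k ≥ 0, F(2k) = C(2k+1, k) and F(2k+1) = 2·C(2k+1, k). -/
open Finset

lemma catalan_succ_range (n : ℕ) :
    catalan (n + 1) = ∑ j ∈ range (n + 1), catalan j * catalan (n - j) := by
  rw [catalan_succ', Finset.Nat.sum_antidiagonal_eq_sum_range_succ
    (fun x y => catalan x * catalan y) n]

lemma centralBinom_succ_eq (n : ℕ) :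
    Nat.centralBinom (n + 1) = 2 * (2 * n + 1).choose n := by
  have h : (2 * (n + 1)) = (2 * n + 1) + 1 := by ring
  rw [Nat.centralBinom, h, Nat.choose_succ_succ']
  have h2 : (2 * n + 1).choose (n + 1) = (2 * n + 1).choose n := by
    have := Nat.choose_symm (show n ≤ 2 * n + 1 by omega)
    have e : 2 * n + 1 - n = n + 1 := by omega
    rw [e] at this
    exact this
  omega

lemma conv1 (n : ℕ) :
    ∑ j ∈ range (n + 1), catalan j * Nat.centralBinom (n - j) = (2 * n + 1).choose n := by
  apply Nat.eq_of_mul_eq_mul_left (show 0 < 2 by norm_num)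
  rw [Finset.mul_sum]
  have key : ∀ j ∈ range (n + 1),
      2 * (catalan j * Nat.centralBinom (n - j)) =
        catalan j * catalan (n - j) * (n - j + 1) + catalan j * catalan (n - j) * (n - j + 1) := by
    intro j hj
    rw [← succ_mul_catalan_eq_centralBinom (n - j)]
    ring
  rw [Finset.sum_congr rfl key, Finset.sum_add_distrib]
  have refl2 : ∑ j ∈ range (n + 1), catalan j * catalan (n - j) * (n - j + 1)
      = ∑ j ∈ range (n + 1), catalan j * catalan (n - j) * (j + 1) := by
    rw [← Finset.sum_range_reflect]
    apply Finset.sum_congr rfl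
    intro j hj
    simp only [mem_range] at hj
    have h1 : n - (n - j) = j := by omega
    have h2 : n + 1 - 1 - j = n - j := by omega
    rw [h2, h1, mul_comm (catalan (n-j)) (catalan j)]
  nth_rewrite 1 [refl2]
  have : ∀ j ∈ range (n + 1),
      catalan j * catalan (n - j) * (j + 1) + catalan j * catalan (n - j) * (n - j + 1)
        = (n + 2) * (catalan j * catalan (n - j)) := by
    intro j hj
    simp only [mem_range] at hj
    have : (j + 1) + (n - j + 1) = n + 2 := by omega
    rw [← mul_add, this]; ring
  rw [← Finset.sum_add_distrib, Finset.sum_congr rfl this, ← Finset.mul_sum,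
    ← catalan_succ_range, succ_mul_catalan_eq_centralBinom, centralBinom_succ_eq]

lemma tri_swap (m : ℕ) (f : ℕ → ℕ → ℕ) :
    ∑ j ∈ range (m + 1), ∑ i ∈ range (m + 1 - j), f j i
      = ∑ t ∈ range (m + 1), ∑ j ∈ range (t + 1), f j (t - j) := by
  have h := Finset.sum_Ico_Ico_comm 0 (m + 1) (fun i j => f i (j - i))
  simp only [Nat.Ico_zero_eq_range] at h
  rw [← h]
  apply Finset.sum_congr rfl
  intro j hj
  rw [Finset.sum_Ico_eq_sum_range]
  apply Finset.sum_congr rfl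
  intro i hi
  congr 1
  omega

lemma conv2 (m : ℕ) :
    ∑ j ∈ range (m + 1), catalan j * (2 * (m - j) + 1).choose (m - j)
      = ∑ t ∈ range (m + 1), catalan (t + 1) * Nat.centralBinom (m - t) := by
  have expand : ∀ j ∈ range (m + 1),
      catalan j * (2 * (m - j) + 1).choose (m - j)
        = ∑ i ∈ range (m + 1 - j), catalan j * (catalan i * Nat.centralBinom (m - j - i)) := by
    intro j hj
    simp only [mem_range] at hj
    have e : m + 1 - j = (m - j) + 1 := by omega
    rw [e, ← conv1 (m - j), Finset.mul_sum]
  rw [Finset.sum_congr rfl expand,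
    tri_swap m (fun j i => catalan j * (catalan i * Nat.centralBinom (m - j - i)))]
  apply Finset.sum_congr rfl
  intro t ht
  simp only [mem_range] at ht
  rw [catalan_succ_range t, Finset.sum_mul]
  apply Finset.sum_congr rfl
  intro j hj
  simp only [mem_range] at hj
  have e : m - j - (t - j) = m - t := by omega
  rw [e]; ring

lemma main_identity (m : ℕ) :
    (2 * (m + 1) + 1).choose (m + 1)
      = 2 * (2 * m + 1).choose m
        + ∑ j ∈ range (m + 1), catalan j * (2 * (m - j) + 1).choose (m - j) := by
  rw [← conv1 (m + 1), Finset.sum_range_succ' _ (m + 1)]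
  have e1 : ∀ t ∈ range (m + 1), catalan (t + 1) * Nat.centralBinom (m + 1 - (t + 1))
      = catalan (t + 1) * Nat.centralBinom (m - t) := by
    intro t ht; congr 2; omega
  rw [Finset.sum_congr rfl e1, ← conv2]
  simp only [catalan_zero, one_mul, Nat.sub_zero]
  rw [centralBinom_succ_eq]
  ring

open scoped Classical

theorem recurrence_closed_form (F : ℕ → ℕ)
    (h0 : F 0 = 1) (h1 : F 1 = 2) (h2 : F 2 = 3) (h3 : F 3 = 6)
    (hrec : ∀ m, 4 ≤ m →
      F m = 3 * F (m - 2) + ∑ i ∈ Finset.Icc 2 (m / 2), catalan (i - 1) * F (m - 2 * i)) :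
    ∀ k : ℕ, F (2 * k) = (2 * k + 1).choose k ∧ F (2 * k + 1) = 2 * (2 * k + 1).choose k := by
  intro k
  induction k using Nat.strong_induction_on with
  | _ k ih =>
    match k with
    | 0 => refine ⟨?_, ?_⟩ <;> simp [h0, h1]
    | 1 => refine ⟨?_, ?_⟩ <;> simp [h2, h3]
    | (n + 2) =>
      have ihp : F (2 * (n + 1)) = (2 * (n + 1) + 1).choose (n + 1) ∧
          F (2 * (n + 1) + 1) = 2 * ((2 * (n + 1) + 1).choose (n + 1)) :=
        ih (n + 1) (by omega)
      -- even case
      have heven : F (2 * (n + 2)) = (2 * (n + 2) + 1).choose (n + 2) := by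
        have hm := hrec (2 * (n + 2)) (by omega)
        have e1 : 2 * (n + 2) - 2 = 2 * (n + 1) := by omega
        have e2 : 2 * (n + 2) / 2 = n + 2 := by omega
        rw [e1, e2] at hm
        have hsum : ∑ i ∈ Finset.Icc 2 (n + 2), catalan (i - 1) * F (2 * (n + 2) - 2 * i)
            = ∑ j ∈ Finset.range (n + 1),
                catalan (j + 1) * (2 * (n - j) + 1).choose (n - j) := by
          rw [show Finset.Icc 2 (n + 2) = Finset.Ico 2 (n + 3) by rfl,
            Finset.sum_Ico_eq_sum_range]
          apply Finset.sum_congr rfl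
          intro j hj
          simp only [Finset.mem_range] at hj
          have e3 : 2 + j - 1 = j + 1 := by omega
          have e4 : 2 * (n + 2) - 2 * (2 + j) = 2 * (n - j) := by omega
          rw [e3, e4, (ih (n - j) (by omega)).1]
        rw [hm, hsum, ihp.1, main_identity (n + 1), Finset.sum_range_succ' _ (n + 1)]
        simp only [catalan_zero, one_mul, Nat.sub_zero]
        have e5 : ∀ j, n + 1 - (j + 1) = n - j := fun j => by omega
        simp only [e5]
        ring
      refine ⟨heven, ?_⟩
      -- odd case
      have hm := hrec (2 * (n + 2) + 1) (by omega)
      have e1 : 2 * (n + 2) + 1 - 2 = 2 * (n + 1) + 1 := by omega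
      have e2 : (2 * (n + 2) + 1) / 2 = n + 2 := by omega
      rw [e1, e2] at hm
      have hsum : ∑ i ∈ Finset.Icc 2 (n + 2), catalan (i - 1) * F (2 * (n + 2) + 1 - 2 * i)
          = ∑ j ∈ Finset.range (n + 1),
              catalan (j + 1) * (2 * ((2 * (n - j) + 1).choose (n - j))) := by
        rw [show Finset.Icc 2 (n + 2) = Finset.Ico 2 (n + 3) by rfl,
          Finset.sum_Ico_eq_sum_range]
        apply Finset.sum_congr rfl
        intro j hj
        simp only [Finset.mem_range] at hj
        have e3 : 2 + j - 1 = j + 1 := by omega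
        have e4 : 2 * (n + 2) + 1 - 2 * (2 + j) = 2 * (n - j) + 1 := by omega
        rw [e3, e4, (ih (n - j) (by omega)).2]
      rw [hm, hsum, ihp.2, main_identity (n + 1), Finset.sum_range_succ' _ (n + 1)]
      simp only [catalan_zero, one_mul, Nat.sub_zero]
      have e5 : ∀ j, n + 1 - (j + 1) = n - j := fun j => by omega
      simp only [e5]
      have hfac : ∑ j ∈ Finset.range (n + 1),
          catalan (j + 1) * (2 * ((2 * (n - j) + 1).choose (n - j)))
            = 2 * ∑ j ∈ Finset.range (n + 1),
                catalan (j + 1) * (2 * (n - j) + 1).choose (n - j) := by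
        rw [Finset.mul_sum]
        exact Finset.sum_congr rfl fun j _ => by ring
      rw [hfac]
      ring
end

section
/- Let h(x) = Σ_{k≥0} C(2k+1,k) x^{2k} and g(x) = Σ_{k≥0} Cat_k x^{2k}. Then h(x)·g(x) = (h(x) − 1)/x^2 − 2h(x) as formal power series; equivalently, for all k ≥ 0, Σ_{i=0}^{k} Cat_i · C(2(k−i)+1, k−i) = C(2k+3, k+1) − 2·C(2k+1, k). -/
open scoped Classical

-- catalan n + C(2n, n+1) = C(2n, n)
lemma catAux (n : ℕ) : catalan n + (2*n).choose (n+1) = (2*n).choose n := by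
  apply Nat.eq_of_mul_eq_mul_left (Nat.succ_pos n)
  have h1 : (n+1) * catalan n = (2*n).choose n := succ_mul_catalan_eq_centralBinom n
  have h2 : (2*n).choose (n+1) * (n+1) = (2*n).choose n * (2*n - n) :=
    Nat.choose_succ_right_eq _ _
  have h3 : 2*n - n = n := by omega
  rw [h3] at h2
  nlinarith [h1, h2]

lemma main : ∀ (k j : ℕ),
    (∑ i ∈ Finset.range (k+1), catalan i * (2*(k-i)+j).choose (k-i))
      = (2*k+j+1).choose k := by
  intro k
  induction k with
  | zero => intro j; simp
  | succ k ihk =>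
    intro j
    induction j with
    | zero =>
      rw [Finset.sum_range_succ]
      have hterm : ∀ i ∈ Finset.range (k+1),
          catalan i * (2*(k+1-i)+0).choose (k+1-i)
            = 2 * (catalan i * (2*(k-i)+1).choose (k-i)) := by
        intro i hi
        rw [Finset.mem_range] at hi
        have hle : i ≤ k := by omega
        have hs : k+1-i = (k-i)+1 := by omega
        rw [hs]
        have hp : (2*((k-i)+1)+0).choose ((k-i)+1)
            = 2 * (2*(k-i)+1).choose (k-i) := by
          have e : 2*((k-i)+1)+0 = (2*(k-i)+1)+1 := by ring
          rw [e, Nat.choose_succ_succ]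
          have : (2*(k-i)+1).choose ((k-i)+1) = (2*(k-i)+1).choose (k-i) := by
            rw [← Nat.choose_symm (by omega : (k-i)+1 ≤ 2*(k-i)+1)]
            congr 1
            omega
          simp only [Nat.succ_eq_add_one]
          omega
        rw [hp]; ring
      rw [Finset.sum_congr rfl hterm, ← Finset.mul_sum, ihk 1]
      have hc := catAux (k+1)
      have hsym : (2*(k+1)).choose (k+1+1) = (2*(k+1)).choose k := by
        rw [← Nat.choose_symm (by omega : k+1+1 ≤ 2*(k+1))]
        congr 1; omega
      have hp1 : (2*(k+1)+0+1).choose (k+1)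
          = (2*(k+1)).choose k + (2*(k+1)).choose (k+1) := by
        have e : 2*(k+1)+0+1 = (2*(k+1))+1 := by ring
        rw [e, Nat.choose_succ_succ]
      have e3 : 2*k+1+1 = 2*(k+1) := by ring
      simp only [Nat.sub_self, Nat.choose_zero_right, mul_one, Nat.succ_eq_add_one]
      rw [e3]
      omega
    | succ j ihj =>
      rw [Finset.sum_range_succ]
      have hterm : ∀ i ∈ Finset.range (k+1),
          catalan i * (2*(k+1-i)+(j+1)).choose (k+1-i)
            = catalan i * (2*(k+1-i)+j).choose (k+1-i)
              + catalan i * (2*(k-i)+(j+2)).choose (k-i) := by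
        intro i hi
        rw [Finset.mem_range] at hi
        have hs : k+1-i = (k-i)+1 := by omega
        rw [hs]
        have hp : (2*((k-i)+1)+(j+1)).choose ((k-i)+1)
            = (2*((k-i)+1)+j).choose ((k-i)+1) + (2*(k-i)+(j+2)).choose (k-i) := by
          have e : 2*((k-i)+1)+(j+1) = (2*(k-i)+(j+2))+1 := by ring
          rw [e, Nat.choose_succ_succ]
          have e2 : 2*(k-i)+(j+2) = 2*((k-i)+1)+j := by ring
          rw [e2]
          simp only [Nat.succ_eq_add_one]
          omega
        rw [hp]; ring
      rw [Finset.sum_congr rfl hterm, Finset.sum_add_distrib, ihk (j+2)]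
      have hj' : (∑ i ∈ Finset.range (k+1), catalan i * (2*(k+1-i)+j).choose (k+1-i))
          + catalan (k+1) = (2*(k+1)+j+1).choose (k+1) := by
        have := ihj
        rw [Finset.sum_range_succ] at this
        simpa using this
      have hp2 : (2*(k+1)+(j+1)+1).choose (k+1)
          = (2*(k+1)+j+1).choose k + (2*(k+1)+j+1).choose (k+1) := by
        have e : 2*(k+1)+(j+1)+1 = (2*(k+1)+j+1)+1 := by ring
        rw [e, Nat.choose_succ_succ]
      have e3 : 2*k+(j+2)+1 = 2*(k+1)+j+1 := by ring
      simp only [Nat.sub_self, Nat.choose_zero_right, mul_one, Nat.succ_eq_add_one]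
      rw [e3]
      omega

theorem catalan_convolution (k : ℕ) :
    (∑ i ∈ Finset.range (k + 1),
      (catalan i : ℤ) * ((2 * (k - i) + 1).choose (k - i) : ℤ))
    = ((2 * k + 3).choose (k + 1) : ℤ) - 2 * ((2 * k + 1).choose k : ℤ) := by
  have h := main k 1
  have hrhs : (2*k+3).choose (k+1) = (2*k+1+1).choose k + 2 * (2*k+1).choose k := by
    have e : 2*k+3 = (2*k+2)+1 := by ring
    rw [e, Nat.choose_succ_succ]
    have e2 : 2*k+2 = (2*k+1)+1 := by ring
    rw [e2, Nat.choose_succ_succ]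
    have hsym : (2*k+1).choose (k+1) = (2*k+1).choose k := by
      rw [← Nat.choose_symm (by omega : k+1 ≤ 2*k+1)]
      congr 1; omega
    simp only [Nat.succ_eq_add_one]
    omega
  have hcast : (∑ i ∈ Finset.range (k + 1),
      (catalan i : ℤ) * ((2 * (k - i) + 1).choose (k - i) : ℤ))
      = ((∑ i ∈ Finset.range (k+1), catalan i * (2*(k-i)+1).choose (k-i) : ℕ) : ℤ) := by
    push_cast
    rfl
  rw [hcast, h, hrhs]
  push_cast
  ring
end

section
/- For all nonnegative integers ℓ and all n ≥ 2, with ζ a primitive (n−1)-th root of unity, Cat_n(ζ^ℓ) = Cat_n(ζ^{2ℓ}), i.e., the q-Catalan polynomial takes the same value at ζ^ℓ and at its square. -/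
open scoped Classical

noncomputable def qInt {K : Type*} [Field K] (q : K) (n : ℕ) : K :=
  ∑ i ∈ Finset.range n, q ^ i

noncomputable def qFact {K : Type*} [Field K] (q : K) (n : ℕ) : K :=
  ∏ i ∈ Finset.range n, qInt q (i + 1)

noncomputable def qBinom {K : Type*} [Field K] (q : K) (n k : ℕ) : K :=
  qFact q n / (qFact q k * qFact q (n - k))

noncomputable def qCat {K : Type*} [Field K] (q : K) (n : ℕ) : K :=
  qBinom q (2 * n) n / qInt q (n + 1)

open Polynomial Finset

/-- Polynomial version of `qInt`. -/
noncomputable def qIntP (k : ℕ) : Polynomial ℚ := ∑ i ∈ Finset.range k, Polynomial.X ^ i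

/-- Polynomial version of `qFact`. -/
noncomputable def qFactP (N : ℕ) : Polynomial ℚ := ∏ i ∈ Finset.range N, qIntP (i + 1)

lemma algMap_qIntP (k : ℕ) :
    algebraMap (Polynomial ℚ) (RatFunc ℚ) (qIntP k) = qInt (RatFunc.X : RatFunc ℚ) k := by
  simp [qIntP, qInt, map_sum, map_pow, RatFunc.algebraMap_X]

lemma algMap_qFactP (N : ℕ) :
    algebraMap (Polynomial ℚ) (RatFunc ℚ) (qFactP N) = qFact (RatFunc.X : RatFunc ℚ) N := by
  simp [qFactP, qFact, map_prod, algMap_qIntP]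

lemma qIntP_ne_zero {k : ℕ} (hk : k ≠ 0) : qIntP k ≠ 0 := by
  intro h
  have h1 : Polynomial.eval (1 : ℚ) (qIntP k) = k := by
    simp [qIntP, Polynomial.eval_finset_sum]
  rw [h, Polynomial.eval_zero] at h1
  exact hk (by exact_mod_cast h1.symm)

lemma qFactP_ne_zero (N : ℕ) : qFactP N ≠ 0 := by
  refine Finset.prod_ne_zero_iff.mpr fun i _ => qIntP_ne_zero (by omega)

lemma poly_identity (n : ℕ) (P : Polynomial ℚ)
    (hP : algebraMap (Polynomial ℚ) (RatFunc ℚ) P = qCat (RatFunc.X : RatFunc ℚ) n) :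
    P * (qFactP n ^ 2 * qIntP (n + 1)) = qFactP (2 * n) := by
  apply RatFunc.algebraMap_injective ℚ
  have h2n : 2 * n - n = n := by omega
  have hF : qFact (RatFunc.X : RatFunc ℚ) n ≠ 0 := by
    rw [← algMap_qFactP]
    exact (map_ne_zero_iff _ (RatFunc.algebraMap_injective ℚ)).mpr (qFactP_ne_zero n)
  have hI : qInt (RatFunc.X : RatFunc ℚ) (n + 1) ≠ 0 := by
    rw [← algMap_qIntP]
    exact (map_ne_zero_iff _ (RatFunc.algebraMap_injective ℚ)).mpr (qIntP_ne_zero (by omega))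
  rw [map_mul, map_mul, map_pow, hP, algMap_qFactP, algMap_qFactP, algMap_qIntP]
  rw [qCat, qBinom, h2n, pow_two]
  field_simp

/-- The auxiliary "skip" polynomial `∑_{j<t} X^(d j)`. -/
noncomputable def sP (d t : ℕ) : Polynomial ℚ := ∑ j ∈ Finset.range t, Polynomial.X ^ (d * j)

lemma qIntP_mul (d t : ℕ) : qIntP (d * t) = qIntP d * sP d t := by
  induction t with
  | zero => simp [qIntP, sP]
  | succ t ih =>
    have h : d * (t + 1) = d * t + d := by ring
    have e1 : qIntP (d * t + d)
        = qIntP (d * t) + ∑ i ∈ Finset.range d, (Polynomial.X : Polynomial ℚ) ^ (d * t + i) := by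
      simp only [qIntP]
      rw [Finset.sum_range_add]
    have e2 : sP d (t + 1) = sP d t + Polynomial.X ^ (d * t) := by
      simp only [sP]
      rw [Finset.sum_range_succ]
    have h2 : ∑ i ∈ Finset.range d, (Polynomial.X : Polynomial ℚ) ^ (d * t + i)
        = Polynomial.X ^ (d * t) * qIntP d := by
      simp only [qIntP]
      rw [Finset.mul_sum]
      exact Finset.sum_congr rfl fun i _ => by rw [← pow_add]
    rw [h, e1, ih, e2, h2]
    ring

/-- Factor of `qFactP` with the `d`-divisible parts replaced. -/
noncomputable def fP (d i : ℕ) : Polynomial ℚ :=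
  if d ∣ i then sP d (i / d) else qIntP i

lemma qFactP_factor (d : ℕ) (hd : 0 < d) (N : ℕ) :
    qFactP N = qIntP d ^ (N / d) * ∏ i ∈ Finset.range N, fP d (i + 1) := by
  induction N with
  | zero => simp [qFactP]
  | succ N ih =>
    rw [show qFactP (N + 1) = qFactP N * qIntP (N + 1) by
      simp only [qFactP]
      rw [Finset.prod_range_succ]]
    rw [ih, Finset.prod_range_succ]
    rw [Nat.succ_div]
    by_cases h : d ∣ N + 1
    · obtain ⟨t, ht⟩ := h
      have htd : (N + 1) / d = t := by rw [ht, Nat.mul_div_cancel_left _ hd]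
      have h2 : qIntP (N + 1) = qIntP d * sP d t := by rw [ht, qIntP_mul]
      rw [if_pos ⟨t, ht⟩, fP, if_pos ⟨t, ht⟩, htd, h2, pow_add, pow_one]
      ring
    · rw [if_neg h, fP, if_neg h]
      ring

section Eval

variable {d : ℕ} {ω : ℂ}

lemma aeval_qIntP (x : ℂ) (k : ℕ) : Polynomial.aeval x (qIntP k) = qInt x k := by
  simp [qIntP, qInt]

lemma aeval_sP (hωd : ω ^ d = 1) (t : ℕ) : Polynomial.aeval ω (sP d t) = (t : ℂ) := by
  simp [sP, pow_mul, hωd]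

lemma qInt_add_period (hω : IsPrimitiveRoot ω d) (hd : 2 ≤ d) (s : ℕ) :
    qInt ω (s + d) = qInt ω s := by
  have e1 : qInt ω (s + d) = qInt ω s + ∑ i ∈ Finset.range d, ω ^ (s + i) := by
    simp only [qInt]
    rw [Finset.sum_range_add]
  rw [e1]
  have h0 : ∑ i ∈ Finset.range d, ω ^ (s + i) = ω ^ s * ∑ i ∈ Finset.range d, ω ^ i := by
    rw [Finset.mul_sum]; exact Finset.sum_congr rfl fun i _ => by rw [← pow_add]
  rw [h0, hω.geom_sum_eq_zero hd, mul_zero, add_zero]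

lemma qInt_mod (hω : IsPrimitiveRoot ω d) (hd : 2 ≤ d) (k : ℕ) : qInt ω k = qInt ω (k % d) := by
  have key : ∀ t s : ℕ, qInt ω (s + d * t) = qInt ω s := by
    intro t
    induction t with
    | zero => simp
    | succ t ih =>
      intro s
      have : s + d * (t + 1) = (s + d * t) + d := by ring
      rw [this, qInt_add_period hω hd, ih]
  conv_lhs => rw [← Nat.mod_add_div k d]
  exact key _ _

lemma qInt_ne_zero (hω : IsPrimitiveRoot ω d) (hd : 2 ≤ d) {k : ℕ} (h1 : 1 ≤ k) (h2 : k < d) : qInt ω k ≠ 0 := by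
  have hω1 : ω ≠ 1 := hω.ne_one (by omega)
  have : qInt ω k = (ω ^ k - 1) / (ω - 1) := by
    rw [qInt, geom_sum_eq hω1]
  rw [this]
  exact div_ne_zero (sub_ne_zero.mpr (hω.pow_ne_one_of_pos_of_lt (by omega) h2))
    (sub_ne_zero.mpr hω1)

lemma mod_succ_of_dvd {N : ℕ} (hd : 0 < d) (h : d ∣ N + 1) :
    N % d = d - 1 ∧ (N + 1) % d = 0 := by
  have h1 := Nat.mod_add_div N d
  have h2 : N % d < d := Nat.mod_lt _ hd
  have h3 : d ∣ N % d + 1 := by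
    have : N + 1 = (N % d + 1) + d * (N / d) := by omega
    rw [this] at h
    exact (Nat.dvd_add_right ⟨_, rfl⟩).mp (by rwa [Nat.add_comm] at h)
  have h4 : N % d + 1 = d := Nat.le_antisymm (by omega) (Nat.le_of_dvd (by omega) h3)
  refine ⟨by omega, ?_⟩
  obtain ⟨t, ht⟩ := h
  rw [ht, Nat.mul_mod_right]

lemma mod_succ_of_not_dvd {N : ℕ} (hd : 0 < d) (h : ¬ d ∣ N + 1) :
    (N + 1) % d = N % d + 1 := by
  have h1 := Nat.mod_add_div N d
  have h2 : N % d < d := Nat.mod_lt _ hd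
  have h4 : N % d + 1 ≠ d := by
    intro he
    apply h
    refine ⟨N / d + 1, ?_⟩
    have hx : d * (N / d + 1) = d * (N / d) + d := by ring
    omega
  have : N + 1 = d * (N / d) + (N % d + 1) := by omega
  rw [this, Nat.mul_add_mod, Nat.mod_eq_of_lt (by omega)]

lemma prod_f_eval (hω : IsPrimitiveRoot ω d) (hd : 2 ≤ d) (N : ℕ) :
    ∏ i ∈ Finset.range N, Polynomial.aeval ω (fP d (i + 1))
      = (Nat.factorial (N / d) : ℂ) * (∏ r ∈ Finset.range (d - 1), qInt ω (r + 1)) ^ (N / d)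
        * ∏ r ∈ Finset.range (N % d), qInt ω (r + 1) := by
  have hd0 : 0 < d := by omega
  induction N with
  | zero => simp
  | succ N ih =>
    rw [Finset.prod_range_succ, ih, Nat.succ_div]
    by_cases h : d ∣ N + 1
    · obtain ⟨hN1, hN2⟩ := mod_succ_of_dvd hd0 h
      have hf : Polynomial.aeval ω (fP d (N + 1)) = ((N + 1) / d : ℕ) := by
        rw [fP, if_pos h, aeval_sP hω.pow_eq_one]
      have hdiv : (N + 1) / d = N / d + 1 := by rw [Nat.succ_div, if_pos h]
      rw [hf, hdiv, if_pos h, hN1, hN2]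
      rw [Nat.factorial_succ]
      simp only [Finset.range_zero, Finset.prod_empty]
      push_cast
      ring
    · have hN2 := mod_succ_of_not_dvd hd0 h
      have hf : Polynomial.aeval ω (fP d (N + 1)) = qInt ω (N % d + 1) := by
        rw [fP, if_neg h, aeval_qIntP, qInt_mod hω hd, ← hN2]
      rw [hf, if_neg h, hN2, Finset.prod_range_succ]
      simp only [Nat.add_zero]
      ring

end Eval

lemma key_value (n d m : ℕ) (hd : 3 ≤ d) (hdm : n = d * m + 1)
    (ω : ℂ) (hω : IsPrimitiveRoot ω d)
    (P : Polynomial ℚ)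
    (hPB : P * (qFactP n ^ 2 * qIntP (n + 1)) = qFactP (2 * n)) :
    Polynomial.aeval ω P = (Nat.choose (2 * m) m : ℂ) := by
  have hd0 : 0 < d := by omega
  have hd2 : 2 ≤ d := by omega
  -- arithmetic facts
  have hnd : n / d = m := by
    rw [hdm, Nat.mul_add_div hd0, Nat.div_eq_of_lt (by omega), Nat.add_zero]
  have hnm : n % d = 1 := by
    rw [hdm, Nat.mul_add_mod, Nat.mod_eq_of_lt (by omega)]
  have h2n : 2 * n = d * (2 * m) + 2 := by
    have hx : d * (2 * m) = 2 * (d * m) := by ring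
    omega
  have h2nd : 2 * n / d = 2 * m := by
    rw [h2n, Nat.mul_add_div hd0, Nat.div_eq_of_lt (by omega), Nat.add_zero]
  have h2nm : 2 * n % d = 2 := by
    rw [h2n, Nat.mul_add_mod, Nat.mod_eq_of_lt (by omega)]
  have hn1 : n + 1 = d * m + 2 := by omega
  have hn1m : (n + 1) % d = 2 := by
    rw [hn1, Nat.mul_add_mod, Nat.mod_eq_of_lt (by omega)]
  -- cancel the common factor qIntP d ^ (2m)
  have hfac1 := qFactP_factor d hd0 n
  have hfac2 := qFactP_factor d hd0 (2 * n)
  rw [hfac1, hfac2, hnd, h2nd] at hPB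
  have hcancel : P * ((∏ i ∈ Finset.range n, fP d (i + 1)) ^ 2 * qIntP (n + 1))
      = ∏ i ∈ Finset.range (2 * n), fP d (i + 1) := by
    have hc : qIntP d ^ (2 * m) ≠ 0 := pow_ne_zero _ (qIntP_ne_zero (by omega))
    apply mul_left_cancel₀ hc
    calc qIntP d ^ (2 * m) *
          (P * ((∏ i ∈ Finset.range n, fP d (i + 1)) ^ 2 * qIntP (n + 1)))
        = P * ((qIntP d ^ m * ∏ i ∈ Finset.range n, fP d (i + 1)) ^ 2 * qIntP (n + 1)) := by
          ring
      _ = qIntP d ^ (2 * m) * ∏ i ∈ Finset.range (2 * n), fP d (i + 1) := by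
          rw [hPB]
  -- evaluate at ω
  have heval := congrArg (Polynomial.aeval ω) hcancel
  rw [map_mul, map_mul, map_pow, map_prod, map_prod, aeval_qIntP] at heval
  set Q : ℂ := ∏ r ∈ Finset.range (d - 1), qInt ω (r + 1) with hQ
  have hprod1 : ∏ i ∈ Finset.range n, Polynomial.aeval ω (fP d (i + 1))
      = (Nat.factorial m : ℂ) * Q ^ m := by
    rw [prod_f_eval hω hd2, hnd, hnm, Finset.prod_range_one]
    have h1 : qInt ω 1 = 1 := by simp [qInt]
    rw [h1, mul_one]
  have hprod2 : ∏ i ∈ Finset.range (2 * n), Polynomial.aeval ω (fP d (i + 1))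
      = (Nat.factorial (2 * m) : ℂ) * Q ^ (2 * m) * qInt ω 2 := by
    rw [prod_f_eval hω hd2, h2nd, h2nm]
    congr 1
    rw [Finset.prod_range_succ, Finset.prod_range_one]
    have h1 : qInt ω 1 = 1 := by simp [qInt]
    rw [h1, one_mul]
  have hqn1 : qInt ω (n + 1) = qInt ω 2 := by rw [qInt_mod hω hd2, hn1m]
  rw [hprod1, hprod2, hqn1] at heval
  -- nonvanishing
  have hQne : Q ≠ 0 := by
    rw [hQ]
    refine Finset.prod_ne_zero_iff.mpr fun r hr => ?_
    have hr' : r < d - 1 := Finset.mem_range.mp hr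
    exact qInt_ne_zero hω hd2 (by omega) (by omega)
  have h2ne : qInt ω 2 ≠ 0 := qInt_ne_zero hω hd2 (by omega) (by omega)
  have hmne : (Nat.factorial m : ℂ) ≠ 0 := Nat.cast_ne_zero.mpr (Nat.factorial_ne_zero m)
  -- conclude
  have hch : (Nat.choose (2 * m) m : ℂ) * (Nat.factorial m : ℂ) * (Nat.factorial m : ℂ)
      = (Nat.factorial (2 * m) : ℂ) := by
    have := Nat.choose_mul_factorial_mul_factorial (show m ≤ 2 * m by omega)
    have h2mm : 2 * m - m = m := by omega
    rw [h2mm] at this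
    exact_mod_cast congrArg (Nat.cast : ℕ → ℂ) this
  have hne : ((Nat.factorial m : ℂ) * Q ^ m) ^ 2 * qInt ω 2 ≠ 0 :=
    mul_ne_zero (pow_ne_zero _ (mul_ne_zero hmne (pow_ne_zero _ hQne))) h2ne
  apply mul_right_cancel₀ hne
  rw [heval, ← hch]
  ring

theorem qCatalan_power_eq_square (n l : ℕ) (hn : 2 ≤ n) (hne : Even n)
    (ζ : ℂ) (hζ : IsPrimitiveRoot ζ (n - 1))
    (P : Polynomial ℚ)
    (hP : algebraMap (Polynomial ℚ) (RatFunc ℚ) P = qCat (RatFunc.X : RatFunc ℚ) n) :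
    Polynomial.aeval (ζ ^ l) P = Polynomial.aeval (ζ ^ (2 * l)) P := by
  have hPB := poly_identity n P hP
  have hn1 : 0 < n - 1 := by omega
  have hodd : Odd (n - 1) := Nat.Even.sub_odd (by omega) hne odd_one
  set g := Nat.gcd (n - 1) l with hg
  have hg0 : 0 < g := Nat.gcd_pos_of_pos_left l hn1
  have hgdvd : g ∣ n - 1 := Nat.gcd_dvd_left _ _
  have hgl : g ∣ l := Nat.gcd_dvd_right _ _
  set d := (n - 1) / g with hd
  have hgd : g * d = n - 1 := Nat.mul_div_cancel' hgdvd
  have hd0 : 0 < d := Nat.div_pos (Nat.le_of_dvd hn1 hgdvd) hg0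
  -- ζ ^ l is a primitive d-th root
  have hprim1 : IsPrimitiveRoot (ζ ^ l) d := by
    have h1 : IsPrimitiveRoot (ζ ^ g) d := hζ.pow hn1 hgd.symm
    have h2 : IsPrimitiveRoot ((ζ ^ g) ^ (l / g)) d :=
      h1.pow_of_coprime _ (Nat.coprime_div_gcd_div_gcd (m := n - 1) (n := l) hg0).symm
    rwa [← pow_mul, Nat.mul_div_cancel' hgl] at h2
  -- gcd with 2l is the same since n-1 is odd
  have hgcd2 : Nat.gcd (n - 1) (2 * l) = g := by
    rw [hg]
    exact Nat.Coprime.gcd_mul_left_cancel_right l (Nat.coprime_two_left.mpr hodd)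
  have hprim2 : IsPrimitiveRoot (ζ ^ (2 * l)) d := by
    have hg2dvd : g ∣ 2 * l := hgcd2 ▸ Nat.gcd_dvd_right (n - 1) (2 * l)
    have h1 : IsPrimitiveRoot (ζ ^ g) d := hζ.pow hn1 hgd.symm
    have hcop : Nat.Coprime (2 * l / g) d := by
      have h0 := Nat.coprime_div_gcd_div_gcd (m := n - 1) (n := 2 * l) (hgcd2 ▸ hg0)
      rw [hgcd2] at h0
      exact h0.symm
    have h2 : IsPrimitiveRoot ((ζ ^ g) ^ (2 * l / g)) d := h1.pow_of_coprime _ hcop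
    rwa [← pow_mul, Nat.mul_div_cancel' hg2dvd] at h2
  -- d is odd
  have hddvd : d ∣ n - 1 := Nat.div_dvd_of_dvd hgdvd
  have hdodd : Odd d := by
    rcases Nat.even_or_odd d with he | ho
    · exfalso
      have h2n1 : 2 ∣ n - 1 := dvd_trans he.two_dvd hddvd
      obtain ⟨j, hj⟩ := hodd
      obtain ⟨t, ht⟩ := h2n1
      omega
    · exact ho
  rcases Nat.lt_or_ge d 2 with hdlt | hdgt
  · -- d = 1 : both powers are 1
    have hd1 : d = 1 := by omega
    have h1 : ζ ^ l = 1 := by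
      have h := hprim1.pow_eq_one
      rw [hd1, pow_one] at h
      exact h
    have h2 : ζ ^ (2 * l) = 1 := by
      rw [two_mul, pow_add, h1, one_mul]
    rw [h1, h2]
  · -- d ≥ 2, and d odd so d ≥ 3
    have hd3 : 3 ≤ d := by
      obtain ⟨k, hk⟩ := hdodd
      omega
    have hgd' : d * g = n - 1 := by rw [mul_comm]; exact hgd
    have hdm : n = d * g + 1 := by omega
    rw [key_value n d g hd3 hdm (ζ ^ l) hprim1 P hPB,
      key_value n d g hd3 hdm (ζ ^ (2 * l)) hprim2 P hPB]
end
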